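/- arXiv:2605.19423 — 3 statements merged into one kernel-verified Lean document; each statement's English description precedes it below -/
import Mathlib

section
/- Let (b,c) be a connected transient graph over (X,m). Then 𝓟 = G𝓖; more precisely, u is a potential if and only if u = Gk for some k ∈ 𝓖, and in that case u ∈ 𝓕, 𝓛u = k and u = G𝓛u, with all involved sums converging absolutely. -/
open Filter MeasureTheory Topology
open scoped ENNReal NNReal

noncomputable section

namespace HG

variable {X : Type*}

open scoped Classical

/-- `f` has finite support (membership in `C_c(X)`). -/
def FinSupp (f : X → ℝ) : Prop := (Function.support f).Finite

/-- Membership in `𝓕`. -/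
def MemF (b : X → X → ℝ) (f : X → ℝ) : Prop :=
  ∀ x : X, Summable fun y => b x y * |f y|

/-- The formal Laplacian `𝓛`. -/
def lap (b : X → X → ℝ) (c m : X → ℝ) (f : X → ℝ) (x : X) : ℝ :=
  (1 / m x) * ∑' y, b x y * (f x - f y) + (c x / m x) * f x

/-- The energy form `𝓠`, valued in `ℝ≥0∞`. -/
def energy (b : X → X → ℝ) (c : X → ℝ) (f : X → ℝ) : ℝ≥0∞ :=
  (1 / 2) * ∑' x, ∑' y, ENNReal.ofReal (b x y * (f x - f y) ^ 2)
    + ∑' x, ENNReal.ofReal (c x * f x ^ 2)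

/-- Membership in `𝓓`, the functions of finite energy. -/
def MemD (b : X → X → ℝ) (c : X → ℝ) (f : X → ℝ) : Prop := energy b c f < ⊤

/-- Membership in `𝓓₀`, the closure of `C_c(X)` w.r.t. `‖f‖_o = (𝓠(f)+f(o)²)^{1/2}`. -/
def MemD0 (b : X → X → ℝ) (c : X → ℝ) (o : X) (f : X → ℝ) : Prop :=
  ∃ φ : ℕ → X → ℝ, (∀ n, FinSupp (φ n)) ∧
    Tendsto (fun n => energy b c (fun x => f x - φ n x)
      + ENNReal.ofReal ((f o - φ n o) ^ 2)) atTop (nhds 0)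

/-- `(b,c)` is a connected graph over `(X,m)`. -/
structure IsGraph (b : X → X → ℝ) (c m : X → ℝ) : Prop where
  symm : ∀ x y, b x y = b y x
  nonneg : ∀ x y, 0 ≤ b x y
  loopless : ∀ x, b x x = 0
  deg_summable : ∀ x, Summable fun y => b x y
  c_nonneg : ∀ x, 0 ≤ c x
  m_pos : ∀ x, 0 < m x
  connected : ∀ x y : X, ∃ (k : ℕ) (p : ℕ → X), p 0 = x ∧ p k = y ∧
    ∀ i < k, 0 < b (p i) (p (i + 1))

/-- `u` is superharmonic: `u ∈ 𝓕` and `𝓛u ≥ 0`. -/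
def Superharmonic (b : X → X → ℝ) (c m : X → ℝ) (u : X → ℝ) : Prop :=
  MemF b u ∧ ∀ x, 0 ≤ lap b c m u x

/-- `u` is subharmonic: `u ∈ 𝓕` and `𝓛u ≤ 0`. -/
def Subharmonic (b : X → X → ℝ) (c m : X → ℝ) (u : X → ℝ) : Prop :=
  MemF b u ∧ ∀ x, lap b c m u x ≤ 0

/-- The Green operator `Gk(x) = ∑_y G(x,y) k(y)`. -/
def Gop (G : X → X → ℝ) (k : X → ℝ) (x : X) : ℝ := ∑' y, G x y * k y

/-- Membership in `𝓖`, the domain of the Green operator. -/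
def MemG (G : X → X → ℝ) (k : X → ℝ) : Prop :=
  ∀ x, Summable fun y => G x y * |k y|

/-- `u` is a potential: `u ∈ 𝓕`, `𝓛u ∈ 𝓖` and `u = G𝓛u`. -/
def IsPotential (b : X → X → ℝ) (c m : X → ℝ) (G : X → X → ℝ) (u : X → ℝ) : Prop :=
  MemF b u ∧ MemG G (lap b c m u) ∧ u = Gop G (lap b c m u)

/-- Membership in `𝓖₂ = {k ∈ 𝓖 : ∑_x m(x)|k(x)| (G|k|)(x) < ∞}`. -/
def MemG2 (m : X → ℝ) (G : X → X → ℝ) (k : X → ℝ) : Prop :=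
  MemG G k ∧ Summable fun x => m x * |k x| * Gop G (fun y => |k y|) x

/-- `G` is the Green function of the (transient) graph `(b,c)` over `(X,m)`:
for every `y`, `G(·,y)` is the unique function in `𝓓₀ ∩ 𝓕` with `𝓛 G(·,y) = 1_y`;
it is strictly positive and symmetric. -/
structure IsGreen (b : X → X → ℝ) (c m : X → ℝ) (o : X) (G : X → X → ℝ) : Prop where
  pos : ∀ x y, 0 < G x y
  symm : ∀ x y, G x y = G y x
  memF : ∀ y, MemF b fun x => G x y
  memD0 : ∀ y, MemD0 b c o fun x => G x y
  lap_eq : ∀ y x, lap b c m (fun z => G z y) x = if x = y then 1 else 0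
  unique : ∀ (y : X) (u : X → ℝ), MemF b u → MemD0 b c o u →
    (∀ x, lap b c m u x = if x = y then 1 else 0) → u = fun x => G x y

/-- `w(φ) = ∑_x m(x) w(x) φ(x)²`. -/
def wsum (m w φ : X → ℝ) : ℝ := ∑' x, m x * w x * φ x ^ 2

/-- `w` is a Hardy type weight: `𝓠(φ) ≥ ∑_x m(x) w(x) φ(x)²` for all `φ ∈ C_c(X)`. -/
def IsHardyType (b : X → X → ℝ) (c m w : X → ℝ) : Prop :=
  ∀ φ : X → ℝ, FinSupp φ → ENNReal.ofReal (wsum m w φ) ≤ energy b c φ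

/-- `w` is a Hardy weight: a non-negative Hardy type weight. -/
def IsHardy (b : X → X → ℝ) (c m w : X → ℝ) : Prop :=
  (∀ x, 0 ≤ w x) ∧ IsHardyType b c m w

/-- A Hardy weight is critical if the only Hardy weight above it is itself. -/
def IsCriticalHardy (b : X → X → ℝ) (c m w : X → ℝ) : Prop :=
  IsHardy b c m w ∧ ∀ w', IsHardy b c m w' → (∀ x, w x ≤ w' x) → w' = w

/-- A Hardy type weight is critical if the only Hardy type weight above it is itself. -/
def IsCriticalHardyType (b : X → X → ℝ) (c m w : X → ℝ) : Prop :=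
  IsHardyType b c m w ∧ ∀ w', IsHardyType b c m w' → (∀ x, w x ≤ w' x) → w' = w

/-- A ground state of `w`: a strictly positive `v ∈ 𝓕` with `𝓛v = wv`. -/
def IsGroundState (b : X → X → ℝ) (c m w v : X → ℝ) : Prop :=
  MemF b v ∧ (∀ x, 0 < v x) ∧ ∀ x, lap b c m v x = w x * v x

/-- A ground state of `w` obtained as pointwise limit of a null sequence. -/
def IsGroundStateSeq (b : X → X → ℝ) (c m w v : X → ℝ) : Prop :=
  IsGroundState b c m w v ∧
  ∃ e : ℕ → X → ℝ, (∀ n, FinSupp (e n)) ∧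
    Tendsto (fun n => (energy b c (e n)).toReal - wsum m w (e n)) atTop (nhds 0) ∧
    ∀ x, Tendsto (fun n => e n x) atTop (nhds (v x))

/-- Membership in `C₀(X)`, functions vanishing at infinity. -/
def MemC0 (f : X → ℝ) : Prop := ∀ ε : ℝ, 0 < ε → {x | ε ≤ |f x|}.Finite

section Aux

set_option maxHeartbeats 1000000

variable {b : X → X → ℝ} {c m : X → ℝ} {o : X} {G : X → X → ℝ}

lemma lap_S (hg : IsGraph b c m) (hG : IsGreen b c m o G) (x z : X) :
    ∑' y, b x y * (G x z - G y z) = m x * (if x = z then 1 else 0) - c x * G x z := by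
  have h := hG.lap_eq z x
  simp only [lap] at h
  have hm : m x ≠ 0 := (hg.m_pos x).ne'
  field_simp at h
  rcases eq_or_ne x z with hxz | hxz
  · simp only [if_pos hxz] at h ⊢; linarith
  · simp only [if_neg hxz] at h ⊢; linarith

lemma summable_bG (hG : IsGreen b c m o G) (x z : X) :
    Summable fun y => b x y * G y z :=
  ((hG.memF z) x).congr fun y => by rw [abs_of_pos (hG.pos y z)]

lemma tsum_bG (hg : IsGraph b c m) (hG : IsGreen b c m o G) (x z : X) :
    ∑' y, b x y * G y z
      = (∑' y, b x y) * G x z + c x * G x z - m x * (if x = z then 1 else 0) := by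
  have h1 := lap_S hg hG x z
  have h2 : ∑' y, b x y * (G x z - G y z)
      = (∑' y, b x y) * G x z - ∑' y, b x y * G y z := by
    rw [show (fun y => b x y * (G x z - G y z))
        = fun y => b x y * G x z - b x y * G y z from funext fun y => by ring,
      Summable.tsum_sub ((hg.deg_summable x).mul_right _) (summable_bG hG x z),
      tsum_mul_right]
  rw [h2] at h1
  linarith

lemma prodSummable (hg : IsGraph b c m) (hG : IsGreen b c m o G) {k : X → ℝ}
    (hk : MemG G k) (x : X) :
    Summable fun p : X × X => b x p.1 * G p.1 p.2 * |k p.2| := by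
  have hnn : (0 : X × X → ℝ) ≤ fun p => b x p.2 * G p.2 p.1 * |k p.1| := fun p =>
    mul_nonneg (mul_nonneg (hg.nonneg _ _) (hG.pos _ _).le) (abs_nonneg _)
  have hzy : Summable fun p : X × X => b x p.2 * G p.2 p.1 * |k p.1| := by
    refine (summable_prod_of_nonneg hnn).mpr ⟨fun z => ?_, ?_⟩
    · exact (summable_bG hG x z).mul_right |k z|
    have hsingle : Summable fun z => (if z = x then m x * |k x| else 0 : ℝ) :=
      ⟨_, hasSum_ite_eq x (m x * |k x|)⟩
    have e : ∀ z, ((∑' y, b x y) + c x) * (G x z * |k z|)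
        - (if z = x then m x * |k x| else 0) = ∑' y, b x y * G y z * |k z| := by
      intro z
      rw [tsum_mul_right, tsum_bG hg hG x z]
      rcases eq_or_ne z x with hz | hz
      · subst hz; rw [if_pos rfl, if_pos rfl]; ring
      · simp only [if_neg hz, if_neg (Ne.symm hz)]; ring
    exact Summable.congr (((hk x).mul_left _).sub hsingle) e
  exact ((Equiv.prodComm X X).summable_iff.mpr hzy).congr fun p => rfl

lemma green_rep [Countable X] (hg : IsGraph b c m) (hG : IsGreen b c m o G)
    {u k : X → ℝ} (hk : MemG G k) (hu : u = Gop G k) :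
    MemF b u ∧ ∀ x, lap b c m u x = k x := by
  have habs : ∀ y, Summable fun z => |G y z * k z| := fun y =>
    (hk y).congr fun z => by rw [abs_mul, abs_of_pos (hG.pos y z)]
  have hk1 : ∀ y, Summable fun z => G y z * k z := fun y => (habs y).of_abs
  have hu_pt : ∀ y, u y = ∑' z, G y z * k z := fun y => by rw [hu]; rfl
  have hT : ∀ x, Summable fun y => b x y * ∑' z, G y z * |k z| := by
    intro x
    have h2 := ((summable_prod_of_nonneg
        (fun p : X × X => mul_nonneg (mul_nonneg (hg.nonneg _ _) (hG.pos _ _).le)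
          (abs_nonneg _))).mp (prodSummable hg hG hk x)).2
    refine h2.congr fun y => ?_
    rw [← tsum_mul_left]
    exact tsum_congr fun z => mul_assoc _ _ _
  have hF : MemF b u := by
    intro x
    refine ((hT x).of_nonneg_of_le
      (fun y => mul_nonneg (hg.nonneg _ _) (abs_nonneg _)) (fun y => ?_))
    have habs2 : |u y| ≤ ∑' z, G y z * |k z| := by
      calc |u y| = ‖∑' z, G y z * k z‖ := by rw [hu_pt y, Real.norm_eq_abs]
        _ ≤ ∑' z, ‖G y z * k z‖ := norm_tsum_le_tsum_norm
            ((habs y).congr fun z => (Real.norm_eq_abs _).symm)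
        _ = ∑' z, G y z * |k z| := tsum_congr fun z => by
            rw [Real.norm_eq_abs, abs_mul, abs_of_pos (hG.pos y z)]
    exact mul_le_mul_of_nonneg_left habs2 (hg.nonneg _ _)
  refine ⟨hF, fun x => ?_⟩
  have hsig : Summable (Function.uncurry fun y z => b x y * ((G x z - G y z) * k z)) := by
    have hdom : Summable fun p : X × X =>
        b x p.1 * (G x p.2 * |k p.2|) + b x p.1 * G p.1 p.2 * |k p.2| :=
      ((hg.deg_summable x).mul_of_nonneg (hk x) (fun y => hg.nonneg x y)
        (fun z => mul_nonneg (hG.pos _ _).le (abs_nonneg _))).add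
        (prodSummable hg hG hk x)
    refine Summable.of_abs (hdom.of_nonneg_of_le (fun p => abs_nonneg _) fun p => ?_)
    have h1 : |G x p.2 - G p.1 p.2| ≤ G x p.2 + G p.1 p.2 := by
      calc |G x p.2 - G p.1 p.2| ≤ |G x p.2| + |G p.1 p.2| := abs_sub _ _
        _ = G x p.2 + G p.1 p.2 := by
            rw [abs_of_pos (hG.pos _ _), abs_of_pos (hG.pos _ _)]
    calc |Function.uncurry (fun y z => b x y * ((G x z - G y z) * k z)) p|
        = b x p.1 * (|G x p.2 - G p.1 p.2| * |k p.2|) := by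
          simp only [Function.uncurry]
          rw [abs_mul, abs_mul, abs_of_nonneg (hg.nonneg _ _)]
      _ ≤ b x p.1 * ((G x p.2 + G p.1 p.2) * |k p.2|) := by
          apply mul_le_mul_of_nonneg_left _ (hg.nonneg _ _)
          exact mul_le_mul_of_nonneg_right h1 (abs_nonneg _)
      _ = b x p.1 * (G x p.2 * |k p.2|) + b x p.1 * G p.1 p.2 * |k p.2| := by ring
  have step1 : ∑' y, b x y * (u x - u y)
      = ∑' y, ∑' z, b x y * ((G x z - G y z) * k z) := by
    refine tsum_congr fun y => ?_
    have hdiff : u x - u y = ∑' z, (G x z - G y z) * k z := by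
      rw [hu_pt x, hu_pt y, ← Summable.tsum_sub (hk1 x) (hk1 y)]
      exact tsum_congr fun z => by ring
    rw [hdiff, tsum_mul_left]
  have step2 : ∑' y, ∑' z, b x y * ((G x z - G y z) * k z)
      = ∑' z, ∑' y, b x y * ((G x z - G y z) * k z) :=
    (Summable.tsum_comm hsig).symm
  have step3 : ∑' z, ∑' y, b x y * ((G x z - G y z) * k z)
      = m x * k x - c x * u x := by
    have inner : ∀ z, (∑' y, b x y * ((G x z - G y z) * k z))
        = (m x * (if x = z then 1 else 0)) * k z - c x * (G x z * k z) := by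
      intro z
      rw [show (fun y => b x y * ((G x z - G y z) * k z))
          = fun y => (b x y * (G x z - G y z)) * k z from funext fun y => by ring,
        tsum_mul_right, lap_S hg hG x z]
      ring
    rw [tsum_congr inner]
    have hs0 : Summable fun z => (if z = x then m x * k x else 0 : ℝ) :=
      ⟨_, hasSum_ite_eq x (m x * k x)⟩
    have hs1 : Summable fun z => (m x * (if x = z then 1 else 0)) * k z := by
      refine Summable.congr hs0 fun z => ?_
      rcases eq_or_ne z x with hz | hz
      · subst hz; simp
      · simp [hz, Ne.symm hz]
    have hs2 : Summable fun z => c x * (G x z * k z) := (hk1 x).mul_left _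
    rw [Summable.tsum_sub hs1 hs2, tsum_mul_left, ← hu_pt x]
    congr 1
    have e2 : ∑' z, (m x * (if x = z then 1 else 0)) * k z
        = ∑' z, (if z = x then m x * k x else 0 : ℝ) := by
      refine tsum_congr fun z => ?_
      rcases eq_or_ne z x with hz | hz
      · subst hz; simp
      · simp [hz, Ne.symm hz]
    rw [e2, tsum_ite_eq]
  have hm : m x ≠ 0 := (hg.m_pos x).ne'
  simp only [lap, step1, step2, step3]
  field_simp
  ring

end Aux

/-- Proposition 2.1. `𝓟 = G𝓖`: `u` is a potential iff
`u = Gk` for some `k ∈ 𝓖`, and in this case `u ∈ 𝓕`, `𝓛u = k` and `u = G𝓛u`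
(all sums converging absolutely). -/
theorem stmt2 {X : Type*} [Countable X] (b : X → X → ℝ) (c m : X → ℝ) (o : X)
    (G : X → X → ℝ) (hg : IsGraph b c m) (hG : IsGreen b c m o G)
    (u : X → ℝ) :
    (IsPotential b c m G u ↔ ∃ k : X → ℝ, MemG G k ∧ u = Gop G k) ∧
    (∀ k : X → ℝ, MemG G k → u = Gop G k →
      MemF b u ∧ (∀ x, lap b c m u x = k x) ∧
      MemG G (lap b c m u) ∧ u = Gop G (lap b c m u)) := by
  constructor
  · constructor
    · rintro ⟨h1, h2, h3⟩
      exact ⟨lap b c m u, h2, h3⟩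
    · rintro ⟨k, hk, hu⟩
      obtain ⟨hF, hlap⟩ := green_rep hg hG hk hu
      have hkl : lap b c m u = k := funext hlap
      exact ⟨hF, by rw [hkl]; exact hk, by rw [hkl]; exact hu⟩
  · intro k hk hu
    obtain ⟨hF, hlap⟩ := green_rep hg hG hk hu
    have hkl : lap b c m u = k := funext hlap
    exact ⟨hF, hlap, by rw [hkl]; exact hk, by rw [hkl]; exact hu⟩

end HG
end
end

section
/- Let (b,c) be a connected transient graph over (X,m). If u ∈ C₀(X) ∩ 𝓕 is superharmonic, then u is a potential. -/
open Filter MeasureTheory Topology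
open scoped ENNReal NNReal

noncomputable section

namespace HG

variable {X : Type*}

open scoped Classical

/-! ### Auxiliary lemmas -/

section Aux

variable {b : X → X → ℝ} {c m : X → ℝ}

lemma IsGraph.summable_row (hg : IsGraph b c m) (x : X) : Summable fun z => b x z :=
  hg.deg_summable x

lemma IsGraph.summable_col (hg : IsGraph b c m) (z : X) : Summable fun x => b x z :=
  (hg.deg_summable z).congr fun x => hg.symm z x

lemma memF_summable (hg : IsGraph b c m) {f : X → ℝ} (hf : MemF b f) (x : X) :
    Summable fun z => b x z * f z := by
  apply Summable.of_abs
  refine (hf x).congr fun z => ?_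
  rw [abs_mul, abs_of_nonneg (hg.nonneg x z)]

lemma summable_sub_mul (hg : IsGraph b c m) {f : X → ℝ} (hf : MemF b f) (x : X) :
    Summable fun z => b x z * (f x - f z) := by
  refine (((hg.summable_row x).mul_right (f x)).sub (memF_summable hg hf x)).congr fun z => ?_
  ring

lemma mlap_eq (hg : IsGraph b c m) {f : X → ℝ} (hf : MemF b f) (x : X) :
    m x * lap b c m f x = (∑' z, b x z) * f x - (∑' z, b x z * f z) + c x * f x := by
  have h1 : (∑' z, b x z * (f x - f z)) = (∑' z, b x z) * f x - ∑' z, b x z * f z := by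
    rw [← tsum_mul_right, ← Summable.tsum_sub ((hg.summable_row x).mul_right _) (memF_summable hg hf x)]
    exact tsum_congr fun z => by ring
  have hm := (hg.m_pos x).ne'
  unfold lap
  rw [h1]
  field_simp

lemma memF_of_abs_le (hg : IsGraph b c m) {f g : X → ℝ} (h : ∀ z, |f z| ≤ |g z|)
    (hgF : MemF b g) : MemF b f := fun x =>
  Summable.of_nonneg_of_le (fun z => mul_nonneg (hg.nonneg x z) (abs_nonneg _))
    (fun z => mul_le_mul_of_nonneg_left (h z) (hg.nonneg x z)) (hgF x)

lemma memF_add (hg : IsGraph b c m) {f g : X → ℝ} (hf : MemF b f) (hgF : MemF b g) :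
    MemF b fun z => f z + g z := fun x =>
  Summable.of_nonneg_of_le (fun z => mul_nonneg (hg.nonneg x z) (abs_nonneg _))
    (fun z => mul_le_mul_of_nonneg_left (abs_add_le _ _) (hg.nonneg x z))
    (((hf x).add (hgF x)).congr fun z => by ring)

lemma memF_neg (hg : IsGraph b c m) {f : X → ℝ} (hf : MemF b f) :
    MemF b fun z => -f z :=
  memF_of_abs_le hg (fun z => by rw [abs_neg]) hf

lemma memF_sub (hg : IsGraph b c m) {f g : X → ℝ} (hf : MemF b f) (hgF : MemF b g) :
    MemF b fun z => f z - g z := by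
  have := memF_add hg hf (memF_neg hg hgF)
  refine fun x => (this x).congr fun z => ?_
  ring_nf

lemma memF_smul (hg : IsGraph b c m) {f : X → ℝ} (a : ℝ) (hf : MemF b f) :
    MemF b fun z => a * f z := fun x => by
  have := (hf x).mul_left |a|
  refine this.congr fun z => ?_
  rw [abs_mul]
  ring

lemma memF_finsupp (hg : IsGraph b c m) {f : X → ℝ} (hf : FinSupp f) : MemF b f := by
  intro x
  apply summable_of_ne_finset_zero (s := hf.toFinset)
  intro z hz
  have : f z = 0 := by
    by_contra h
    exact hz (hf.mem_toFinset.mpr h)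
  simp [this]

lemma memF_zero (hg : IsGraph b c m) : MemF b (fun _ => (0 : ℝ)) := fun x => by
  simpa using summable_zero

lemma lap_add (hg : IsGraph b c m) {f g : X → ℝ} (hf : MemF b f) (hgF : MemF b g) (x : X) :
    lap b c m (fun z => f z + g z) x = lap b c m f x + lap b c m g x := by
  unfold lap
  rw [show (fun z => b x z * (f x + g x - (f z + g z)))
      = fun z => b x z * (f x - f z) + b x z * (g x - g z) from funext fun z => by ring]
  rw [Summable.tsum_add (summable_sub_mul hg hf x) (summable_sub_mul hg hgF x)]
  ring

lemma lap_smul (hg : IsGraph b c m) {f : X → ℝ} (a : ℝ) (hf : MemF b f) (x : X) :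
    lap b c m (fun z => a * f z) x = a * lap b c m f x := by
  unfold lap
  rw [show (fun z => b x z * (a * f x - a * f z)) = fun z => a * (b x z * (f x - f z))
      from funext fun z => by ring]
  rw [(summable_sub_mul hg hf x).tsum_mul_left a]
  ring

lemma lap_neg (hg : IsGraph b c m) {f : X → ℝ} (hf : MemF b f) (x : X) :
    lap b c m (fun z => -f z) x = -lap b c m f x := by
  have := lap_smul hg (-1) hf x
  simpa using this

lemma lap_sub (hg : IsGraph b c m) {f g : X → ℝ} (hf : MemF b f) (hgF : MemF b g) (x : X) :
    lap b c m (fun z => f z - g z) x = lap b c m f x - lap b c m g x := by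
  have h1 := lap_add hg hf (memF_neg hg hgF) x
  have h2 := lap_neg hg hgF x
  rw [show (fun z => f z - g z) = fun z => f z + -g z from funext fun z => by ring]
  rw [h1, h2]
  ring

/-- Minimum principle core: at a negative global minimum where the Laplacian is
nonnegative, the function is constant and `c` vanishes. -/
lemma minprop (hg : IsGraph b c m) {f : X → ℝ} (hf : MemF b f) (x₀ : X)
    (hmin : ∀ x, f x₀ ≤ f x) (hneg : f x₀ < 0)
    (H : ∀ x, f x = f x₀ → 0 ≤ lap b c m f x) :
    (∀ x, f x = f x₀) ∧ ∀ x, c x = 0 := by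
  have step : ∀ x, f x = f x₀ → ∀ z, 0 < b x z → f z = f x₀ := by
    intro x hx z hbz
    have h0 : 0 ≤ m x * lap b c m f x := mul_nonneg (hg.m_pos x).le (H x hx)
    have hsum : Summable fun z => b x z * (f x - f z) := summable_sub_mul hg hf x
    have hterm : ∀ z, b x z * (f x - f z) ≤ 0 := fun z =>
      mul_nonpos_of_nonneg_of_nonpos (hg.nonneg x z) (by
        have := hmin z; rw [hx]; linarith)
    have hcf : c x * f x ≤ 0 := mul_nonpos_of_nonneg_of_nonpos (hg.c_nonneg x) (by
      rw [hx]; linarith)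
    have hts : (∑' z, b x z * (f x - f z)) ≤ 0 := tsum_nonpos hterm
    have hlapval : m x * lap b c m f x = (∑' z, b x z * (f x - f z)) + c x * f x := by
      rw [mlap_eq hg hf x]
      rw [← tsum_mul_right, ← Summable.tsum_sub ((hg.summable_row x).mul_right _) (memF_summable hg hf x)]
      rw [show (fun z => b x z * f x - b x z * f z) = fun z => b x z * (f x - f z)
          from funext fun z => by ring]
    have hts0 : (∑' z, b x z * (f x - f z)) = 0 := by
      rw [hlapval] at h0; linarith
    -- each (nonpositive) term is zero
    have hz : ∀ z, 0 ≤ -(b x z * (f x - f z)) := fun z => by linarith [hterm z]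
    have hsumneg : Summable fun z => -(b x z * (f x - f z)) := hsum.neg
    have hle := Summable.le_tsum hsumneg z (fun j _ => hz j)
    have : (∑' z, -(b x z * (f x - f z))) = 0 := by
      rw [tsum_neg, hts0, neg_zero]
    rw [this] at hle
    have hzero : b x z * (f x - f z) = 0 := le_antisymm (hterm z) (by linarith)
    have : f x - f z = 0 := by
      rcases mul_eq_zero.mp hzero with h | h
      · exact absurd h hbz.ne'
      · exact h
    rw [hx] at this
    linarith [this]
  have hconst : ∀ x, f x = f x₀ := by
    intro x
    obtain ⟨k, p, hp0, hpk, hpb⟩ := hg.connected x₀ x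
    have : ∀ i, i ≤ k → f (p i) = f x₀ := by
      intro i
      induction i with
      | zero => intro _; rw [hp0]
      | succ n ih =>
        intro hn
        have hn' : n < k := Nat.lt_of_succ_le hn
        exact step (p n) (ih hn'.le) (p (n + 1)) (hpb n hn')
    rw [← hpk]
    exact this k le_rfl
  refine ⟨hconst, fun x => ?_⟩
  have h0 : 0 ≤ m x * lap b c m f x := mul_nonneg (hg.m_pos x).le (H x (hconst x))
  have hts0 : (∑' z, b x z * (f x - f z)) = 0 := by
    have : (fun z => b x z * (f x - f z)) = fun _ => (0 : ℝ) := by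
      funext z
      rw [hconst x, hconst z]
      ring
    rw [this, tsum_zero]
  have hlapval : m x * lap b c m f x = c x * f x := by
    rw [mlap_eq hg hf x, ← tsum_mul_right,
      ← Summable.tsum_sub ((hg.summable_row x).mul_right _) (memF_summable hg hf x),
      show (fun z => b x z * f x - b x z * f z) = fun z => b x z * (f x - f z)
        from funext fun z => by ring, hts0]
    ring
  rw [hlapval] at h0
  have hcx := hg.c_nonneg x
  have hfx : f x < 0 := by rw [hconst x]; exact hneg
  nlinarith

/-- On a finite graph with `c ≡ 0` there is no function with `𝓛 g = 1_y`. -/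
lemma finX (hg : IsGraph b c m) (hfin : (Set.univ : Set X).Finite) (hc : ∀ x, c x = 0)
    {g : X → ℝ} {y : X} (hgF : MemF b g)
    (hlap : ∀ x, lap b c m g x = if x = y then 1 else 0) : False := by
  haveI : Finite X := Set.finite_univ_iff.mp hfin
  haveI : Fintype X := Fintype.ofFinite X
  have key : ∀ x, m x * lap b c m g x = ∑ z : X, (b x z * g x - b x z * g z) := by
    intro x
    rw [mlap_eq hg hgF x, hc x]
    rw [tsum_eq_sum (s := Finset.univ) (f := fun z => b x z)
        (fun z hz => absurd (Finset.mem_univ z) hz),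
      tsum_eq_sum (s := Finset.univ) (f := fun z => b x z * g z)
        (fun z hz => absurd (Finset.mem_univ z) hz)]
    rw [Finset.sum_sub_distrib, Finset.sum_mul]
    ring
  have hsum0 : (∑ x : X, m x * lap b c m g x) = 0 := by
    have h2 : (∑ x : X, ∑ z : X, (b x z * g x - b x z * g z)) = 0 := by
      have hsymm : ∀ z x : X, b x z * g x - b x z * g z = -(b z x * g z - b z x * g x) := by
        intro z x
        rw [hg.symm x z]
        ring
      have hTT : (∑ x : X, ∑ z : X, (b x z * g x - b x z * g z))
          = -(∑ x : X, ∑ z : X, (b x z * g x - b x z * g z)) := by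
        conv_lhs => rw [Finset.sum_comm (f := fun x z => b x z * g x - b x z * g z)]
        calc (∑ z : X, ∑ x : X, (b x z * g x - b x z * g z))
            = ∑ z : X, ∑ x : X, -(b z x * g z - b z x * g x) := by
              refine Finset.sum_congr rfl fun z _ => Finset.sum_congr rfl fun x _ => hsymm z x
          _ = -(∑ z : X, ∑ x : X, (b z x * g z - b z x * g x)) := by
              simp
      linarith
    calc (∑ x : X, m x * lap b c m g x) = ∑ x : X, ∑ z : X, (b x z * g x - b x z * g z) :=
          Finset.sum_congr rfl fun x _ => key x
      _ = 0 := h2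
  have hsum1 : (∑ x : X, m x * lap b c m g x) = m y := by
    have : ∀ x : X, m x * lap b c m g x = if x = y then m x else 0 := by
      intro x
      rw [hlap x]
      split <;> simp
    rw [Finset.sum_congr rfl fun x _ => this x, Finset.sum_ite_eq' Finset.univ y m]
    simp
  rw [hsum0] at hsum1
  exact absurd hsum1.symm (hg.m_pos y).ne'

/-- Packaged contradiction from a negative minimum. -/
lemma no_neg_min (hg : IsGraph b c m) {o : X} {G : X → X → ℝ} (hG : IsGreen b c m o G)
    {f : X → ℝ} (hf : MemF b f) (x₀ : X) (hmin : ∀ x, f x₀ ≤ f x) (hneg : f x₀ < 0)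
    (H : ∀ x, f x = f x₀ → 0 ≤ lap b c m f x)
    (hUfin : (∀ x, f x = f x₀) → (Set.univ : Set X).Finite) : False := by
  obtain ⟨hconst, hc⟩ := minprop hg hf x₀ hmin hneg H
  exact finX hg (hUfin hconst) hc (hG.memF o) (hG.lap_eq o)

/-- Minimum principle: a superharmonic function in `C₀` is nonnegative. -/
lemma nonneg_of_superharmonic_C0 (hg : IsGraph b c m) {o : X} {G : X → X → ℝ}
    (hG : IsGreen b c m o G) {f : X → ℝ} (hf : MemF b f) (hC0 : MemC0 f)
    (hsh : ∀ x, 0 ≤ lap b c m f x) : ∀ x, 0 ≤ f x := by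
  by_contra hcon
  push_neg at hcon
  obtain ⟨x', hx'⟩ := hcon
  have hAfin : {x | f x ≤ f x'}.Finite := by
    refine (hC0 (-f x') (by linarith)).subset fun x hx => ?_
    have : f x ≤ f x' := hx
    have : |f x| = -f x := abs_of_neg (by linarith)
    simp only [Set.mem_setOf_eq, this]
    linarith
  have hne : (hAfin.toFinset).Nonempty := ⟨x', by simp [hAfin.mem_toFinset]⟩
  obtain ⟨x₀, hx₀mem, hx₀min⟩ := Finset.exists_min_image hAfin.toFinset f hne
  have hx₀A : f x₀ ≤ f x' := by simpa [hAfin.mem_toFinset] using hx₀mem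
  have hmin : ∀ x, f x₀ ≤ f x := by
    intro x
    by_cases hx : f x ≤ f x'
    · exact hx₀min x (by simp [hAfin.mem_toFinset, hx])
    · push_neg at hx; linarith
  have hneg : f x₀ < 0 := lt_of_le_of_lt hx₀A hx'
  refine no_neg_min hg hG hf x₀ hmin hneg (fun x _ => hsh x) fun hconst => ?_
  refine (hC0 (-f x₀) (by linarith)).subset fun x _ => ?_
  have : |f x| = -f x₀ := by rw [hconst x]; exact abs_of_neg hneg
  simp only [Set.mem_setOf_eq, this]
  exact le_rfl

/-- Comparison lemma: the minimum principle for functions nonnegative off a finite set. -/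
lemma compare (hg : IsGraph b c m) {o : X} {G : X → X → ℝ} (hG : IsGreen b c m o G)
    {f : X → ℝ} (hf : MemF b f) (K : Finset X)
    (hout : ∀ x, x ∉ K → 0 ≤ f x)
    (hlapK : ∀ x ∈ K, f x < 0 → 0 ≤ m x * lap b c m f x) : ∀ x, 0 ≤ f x := by
  by_contra hcon
  push_neg at hcon
  obtain ⟨x', hx'⟩ := hcon
  have hx'K : x' ∈ K := by
    by_contra h
    exact absurd (hout x' h) (not_le.mpr hx')
  obtain ⟨x₀, hx₀mem, hx₀min⟩ := Finset.exists_min_image K f ⟨x', hx'K⟩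
  have hx₀neg : f x₀ < 0 := lt_of_le_of_lt (hx₀min x' hx'K) hx'
  have hmin : ∀ x, f x₀ ≤ f x := by
    intro x
    by_cases hx : x ∈ K
    · exact hx₀min x hx
    · linarith [hout x hx]
  have H : ∀ x, f x = f x₀ → 0 ≤ lap b c m f x := by
    intro x hx
    have hxneg : f x < 0 := by rw [hx]; exact hx₀neg
    have hxK : x ∈ K := by
      by_contra h
      exact absurd (hout x h) (not_le.mpr hxneg)
    have := hlapK x hxK hxneg
    have hm := hg.m_pos x
    nlinarith
  refine no_neg_min hg hG hf x₀ hmin hx₀neg H fun hconst => ?_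
  refine K.finite_toSet.subset fun x _ => ?_
  by_contra h
  have := hout x h
  rw [hconst x] at this
  exact absurd this (not_le.mpr hx₀neg)

end Aux


/-! ### Finite Dirichlet problems -/

section Dirichlet

variable {b : X → X → ℝ} {c m : X → ℝ}

/-- Extension by zero of a function on a finite set. -/
def extK (K : Finset X) (w : ↥K → ℝ) : X → ℝ := fun x => if h : x ∈ K then w ⟨x, h⟩ else 0

lemma extK_out (K : Finset X) (w : ↥K → ℝ) {x : X} (hx : x ∉ K) : extK K w x = 0 := by
  simp [extK, hx]

lemma extK_mem (K : Finset X) (w : ↥K → ℝ) (xk : ↥K) : extK K w xk.1 = w xk := by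
  simp [extK, xk.2]

lemma extK_finsupp (K : Finset X) (w : ↥K → ℝ) : FinSupp (extK K w) := by
  refine K.finite_toSet.subset fun x hx => ?_
  by_contra h
  exact hx (extK_out K w h)

/-- The Dirichlet operator on a finite set. -/
def dirL (b : X → X → ℝ) (c : X → ℝ) (K : Finset X) : (↥K → ℝ) →ₗ[ℝ] (↥K → ℝ) where
  toFun w := fun x => ((∑' z, b x.1 z) + c x.1) * w x - ∑ z : ↥K, b x.1 z.1 * w z
  map_add' w v := by
    funext x
    simp only [Pi.add_apply]
    rw [show (∑ z : ↥K, b x.1 z.1 * (w z + v z))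
        = (∑ z : ↥K, b x.1 z.1 * w z) + ∑ z : ↥K, b x.1 z.1 * v z by
      rw [← Finset.sum_add_distrib]; exact Finset.sum_congr rfl fun z _ => by ring]
    ring
  map_smul' a w := by
    funext x
    simp only [Pi.smul_apply, smul_eq_mul, RingHom.id_apply]
    rw [show (∑ z : ↥K, b x.1 z.1 * (a * w z)) = a * ∑ z : ↥K, b x.1 z.1 * w z by
      rw [Finset.mul_sum]; exact Finset.sum_congr rfl fun z _ => by ring]
    ring

lemma mlap_extK (hg : IsGraph b c m) (K : Finset X) (w : ↥K → ℝ) {x : X} (hx : x ∈ K) :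
    m x * lap b c m (extK K w) x = dirL b c K w ⟨x, hx⟩ := by
  rw [mlap_eq hg (memF_finsupp hg (extK_finsupp K w)) x]
  have h1 : (∑' z, b x z * extK K w z) = ∑ z ∈ K, b x z * extK K w z :=
    tsum_eq_sum (fun z hz => by rw [extK_out K w hz, mul_zero])
  have h2 : (∑ z ∈ K, b x z * extK K w z) = ∑ z : ↥K, b x z.1 * w z := by
    rw [← Finset.sum_coe_sort K (fun z => b x z * extK K w z)]
    exact Finset.sum_congr rfl fun z _ => by rw [extK_mem]
  have h3 : extK K w x = w ⟨x, hx⟩ := extK_mem K w ⟨x, hx⟩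
  rw [h1, h2, h3]
  show _ = ((∑' z, b x z) + c x) * w ⟨x, hx⟩ - ∑ z : ↥K, b x z.1 * w z
  ring

lemma dirL_inj (hg : IsGraph b c m) {o : X} {G : X → X → ℝ} (hG : IsGreen b c m o G)
    (K : Finset X) : Function.Injective (dirL b c K) := by
  have key : ∀ w : ↥K → ℝ, dirL b c K w = 0 → ∀ xk : ↥K, 0 ≤ w xk := by
    intro w hw xk
    have hfF : MemF b (extK K w) := memF_finsupp hg (extK_finsupp K w)
    have hcomp := compare hg hG hfF K (fun x hx => (extK_out K w hx).ge)
      (fun x hx _ => by rw [mlap_extK hg K w hx, hw]; exact le_rfl)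
    have := hcomp xk.1
    rwa [extK_mem K w xk] at this
  intro w v h
  have hwv : dirL b c K (w - v) = 0 := by rw [map_sub, h, sub_self]
  have h1 := key _ hwv
  have h2 := key _ (show dirL b c K (-(w - v)) = 0 by rw [map_neg, hwv, neg_zero])
  have hz : w - v = 0 := funext fun xk => by
    have ha := h1 xk
    have hb := h2 xk
    simp only [Pi.neg_apply, neg_nonneg] at hb
    have : (w - v) xk = 0 := le_antisymm hb ha
    simpa using this
  exact sub_eq_zero.mp hz

/-- Specification of the solution of the Dirichlet problem on `K` with datum `1_y`. -/
def DSpec (b : X → X → ℝ) (c m : X → ℝ) (K : Finset X) (y : X) (v : X → ℝ) : Prop :=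
  (∀ x, x ∉ K → v x = 0) ∧ ∀ x ∈ K, m x * lap b c m v x = if x = y then m y else 0

lemma exists_dsol (hg : IsGraph b c m) {o : X} {G : X → X → ℝ} (hG : IsGreen b c m o G)
    (K : Finset X) (y : X) : ∃ v : X → ℝ, DSpec b c m K y v := by
  have hsurj := (LinearMap.injective_iff_surjective).mp (dirL_inj hg hG K)
  obtain ⟨w, hw⟩ := hsurj (fun xk : ↥K => if (xk : X) = y then m y else 0)
  refine ⟨extK K w, fun x hx => extK_out K w hx, fun x hx => ?_⟩
  rw [mlap_extK hg K w hx]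
  exact congrFun hw ⟨x, hx⟩

lemma DSpec.finsupp {K : Finset X} {y : X} {v : X → ℝ} (hv : DSpec b c m K y v) :
    FinSupp v := by
  refine K.finite_toSet.subset fun x hx => ?_
  by_contra h
  exact hx (hv.1 x h)

lemma DSpec.memF (hg : IsGraph b c m) {K : Finset X} {y : X} {v : X → ℝ}
    (hv : DSpec b c m K y v) : MemF b v := memF_finsupp hg hv.finsupp

lemma DSpec.nonneg (hg : IsGraph b c m) {o : X} {G : X → X → ℝ} (hG : IsGreen b c m o G)
    {K : Finset X} {y : X} {v : X → ℝ} (hv : DSpec b c m K y v) : ∀ x, 0 ≤ v x := by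
  refine compare hg hG (hv.memF hg) K (fun x hx => (hv.1 x hx).ge) fun x hx _ => ?_
  rw [hv.2 x hx]
  split
  · exact (hg.m_pos y).le
  · exact le_rfl

lemma DSpec.mlap_out (hg : IsGraph b c m) {K : Finset X} {y : X} {v : X → ℝ}
    (hv : DSpec b c m K y v) {x : X} (hx : x ∉ K) :
    m x * lap b c m v x = -(∑' z, b x z * v z) := by
  rw [mlap_eq hg (hv.memF hg) x, hv.1 x hx]
  ring

lemma DSpec.mlap_out_nonpos (hg : IsGraph b c m) {o : X} {G : X → X → ℝ}
    (hG : IsGreen b c m o G) {K : Finset X} {y : X} {v : X → ℝ}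
    (hv : DSpec b c m K y v) {x : X} (hx : x ∉ K) : m x * lap b c m v x ≤ 0 := by
  rw [hv.mlap_out hg hx]
  have : 0 ≤ ∑' z, b x z * v z :=
    tsum_nonneg fun z => mul_nonneg (hg.nonneg x z) (hv.nonneg hg hG z)
  linarith

lemma DSpec.mono (hg : IsGraph b c m) {o : X} {G : X → X → ℝ} (hG : IsGreen b c m o G)
    {K K' : Finset X} (hKK : K ⊆ K') {y : X} (hy : y ∈ K) {v v' : X → ℝ}
    (hv : DSpec b c m K y v) (hv' : DSpec b c m K' y v') : ∀ x, v x ≤ v' x := by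
  have hfF : MemF b fun x => v' x - v x := memF_sub hg (hv'.memF hg) (hv.memF hg)
  have hcomp := compare hg hG hfF K' (fun x hx => by
      rw [hv'.1 x hx, hv.1 x (fun hxK => hx (hKK hxK))]; simp)
    (fun x hx _ => ?_)
  · intro x
    have := hcomp x
    linarith
  have hlap : m x * lap b c m (fun x => v' x - v x) x
      = m x * lap b c m v' x - m x * lap b c m v x := by
    rw [lap_sub hg (hv'.memF hg) (hv.memF hg) x]
    ring
  rw [hlap, hv'.2 x hx]
  by_cases hxK : x ∈ K
  · rw [hv.2 x hxK]
    simp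
  · have h1 := hv.mlap_out_nonpos hg hG hxK
    have hxy : x ≠ y := fun h => hxK (h ▸ hy)
    rw [if_neg hxy]
    linarith

lemma DSpec.le_G (hg : IsGraph b c m) {o : X} {G : X → X → ℝ} (hG : IsGreen b c m o G)
    {K : Finset X} {y : X} (hy : y ∈ K) {v : X → ℝ} (hv : DSpec b c m K y v) :
    ∀ x, v x ≤ G x y := by
  have hfF : MemF b fun x => G x y - v x := memF_sub hg (hG.memF y) (hv.memF hg)
  have hcomp := compare hg hG hfF K (fun x hx => by
      rw [hv.1 x hx, sub_zero]; exact (hG.pos x y).le)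
    (fun x hx _ => ?_)
  · intro x
    have := hcomp x
    linarith
  have hlap : m x * lap b c m (fun x => G x y - v x) x
      = m x * lap b c m (fun z => G z y) x - m x * lap b c m v x := by
    rw [lap_sub hg (hG.memF y) (hv.memF hg) x]
    ring
  rw [hlap, hG.lap_eq y x, hv.2 x hx]
  by_cases hxy : x = y
  · subst hxy
    simp
  · simp [hxy]

end Dirichlet


/-! ### Green's formula for finitely supported functions -/

section Pairing

variable {b : X → X → ℝ} {c m : X → ℝ}

/-- The pairing `∑ m 𝓛φ ψ`. -/
def pairQ (b : X → X → ℝ) (c m : X → ℝ) (φ ψ : X → ℝ) : ℝ :=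
  ∑' x, m x * lap b c m φ x * ψ x

lemma pairQ_eq_sum {φ ψ : X → ℝ} {T : Finset X} (hψT : ∀ x, ψ x ≠ 0 → x ∈ T) :
    pairQ b c m φ ψ = ∑ x ∈ T, m x * lap b c m φ x * ψ x := by
  refine tsum_eq_sum fun x hx => ?_
  have : ψ x = 0 := by
    by_contra h
    exact hx (hψT x h)
  rw [this, mul_zero]

lemma pairQ_eq_formula (hg : IsGraph b c m) {φ ψ : X → ℝ} (hφ : FinSupp φ)
    {T : Finset X} (hφT : ∀ x, φ x ≠ 0 → x ∈ T) (hψT : ∀ x, ψ x ≠ 0 → x ∈ T) :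
    pairQ b c m φ ψ = (∑ x ∈ T, ((∑' z, b x z) * φ x + c x * φ x) * ψ x)
      - ∑ x ∈ T, ∑ z ∈ T, b x z * φ z * ψ x := by
  rw [pairQ_eq_sum hψT, ← Finset.sum_sub_distrib]
  refine Finset.sum_congr rfl fun x _ => ?_
  rw [mlap_eq hg (memF_finsupp hg hφ) x]
  have h1 : (∑' z, b x z * φ z) = ∑ z ∈ T, b x z * φ z := by
    refine tsum_eq_sum fun z hz => ?_
    have : φ z = 0 := by
      by_contra h
      exact hz (hφT z h)
    rw [this, mul_zero]
  rw [h1, ← Finset.sum_mul]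
  ring

lemma pairQ_comm (hg : IsGraph b c m) {φ ψ : X → ℝ} (hφ : FinSupp φ) (hψ : FinSupp ψ) :
    pairQ b c m φ ψ = pairQ b c m ψ φ := by
  classical
  set T : Finset X := hφ.toFinset ∪ hψ.toFinset with hT
  have hφT : ∀ x, φ x ≠ 0 → x ∈ T := fun x h =>
    Finset.mem_union_left _ (hφ.mem_toFinset.mpr h)
  have hψT : ∀ x, ψ x ≠ 0 → x ∈ T := fun x h =>
    Finset.mem_union_right _ (hψ.mem_toFinset.mpr h)
  rw [pairQ_eq_formula hg hφ hφT hψT, pairQ_eq_formula hg hψ hψT hφT]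
  have hM : (∑ x ∈ T, ∑ z ∈ T, b x z * φ z * ψ x) = ∑ x ∈ T, ∑ z ∈ T, b x z * ψ z * φ x := by
    rw [Finset.sum_comm]
    refine Finset.sum_congr rfl fun x _ => Finset.sum_congr rfl fun z _ => ?_
    rw [hg.symm z x]
    ring
  rw [hM]
  have : (∑ x ∈ T, ((∑' z, b x z) * φ x + c x * φ x) * ψ x)
      = ∑ x ∈ T, ((∑' z, b x z) * ψ x + c x * ψ x) * φ x :=
    Finset.sum_congr rfl fun x _ => by ring
  rw [this]

lemma summable_b_sq (hg : IsGraph b c m) {φ : X → ℝ} (hφ : FinSupp φ) (x : X) :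
    Summable fun z => b x z * (φ x - φ z) ^ 2 := by
  have s1 : Summable fun z => b x z * φ x ^ 2 := (hg.summable_row x).mul_right _
  have s2 : Summable fun z => (2 * φ x) * (b x z * φ z) :=
    ((memF_summable hg (memF_finsupp hg hφ) x)).mul_left _
  have s3 : Summable fun z => b x z * φ z ^ 2 := by
    refine summable_of_ne_finset_zero (s := hφ.toFinset) fun z hz => ?_
    have : φ z = 0 := by
      by_contra h
      exact hz (hφ.mem_toFinset.mpr h)
    rw [this]
    ring
  refine ((s1.sub s2).add s3).congr fun z => ?_
  ring

lemma tx_eq (hg : IsGraph b c m) {φ : X → ℝ} (hφ : FinSupp φ) (x : X) :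
    (∑' z, b x z * (φ x - φ z) ^ 2)
      = φ x ^ 2 * (∑' z, b x z) - 2 * φ x * (∑' z, b x z * φ z)
        + ∑' z, b x z * φ z ^ 2 := by
  have s1 : Summable fun z => b x z * φ x ^ 2 := (hg.summable_row x).mul_right _
  have s2 : Summable fun z => (2 * φ x) * (b x z * φ z) :=
    ((memF_summable hg (memF_finsupp hg hφ) x)).mul_left _
  have s3 : Summable fun z => b x z * φ z ^ 2 := by
    refine summable_of_ne_finset_zero (s := hφ.toFinset) fun z hz => ?_
    have : φ z = 0 := by
      by_contra h
      exact hz (hφ.mem_toFinset.mpr h)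
    rw [this]; ring
  have : (fun z => b x z * (φ x - φ z) ^ 2)
      = fun z => (b x z * φ x ^ 2 - (2 * φ x) * (b x z * φ z)) + b x z * φ z ^ 2 :=
    funext fun z => by ring
  rw [this, Summable.tsum_add (s1.sub s2) s3, Summable.tsum_sub s1 s2]
  rw [tsum_mul_right, (memF_summable hg (memF_finsupp hg hφ) x).tsum_mul_left (2 * φ x)]
  ring

lemma summable_q (hg : IsGraph b c m) {φ : X → ℝ} (hφ : FinSupp φ) :
    Summable fun x => ∑' z, b x z * φ z ^ 2 := by
  have hrw : ∀ x : X, (∑' z, b x z * φ z ^ 2) = ∑ z ∈ hφ.toFinset, b x z * φ z ^ 2 := by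
    intro x
    refine tsum_eq_sum fun z hz => ?_
    have : φ z = 0 := by
      by_contra h
      exact hz (hφ.mem_toFinset.mpr h)
    rw [this]; ring
  refine (summable_sum (s := hφ.toFinset)
    (f := fun z x => b x z * φ z ^ 2) ?_).congr fun x => (hrw x).symm
  intro z _
  exact (hg.summable_col z).mul_right _

lemma summable_t (hg : IsGraph b c m) {φ : X → ℝ} (hφ : FinSupp φ) :
    Summable fun x => ∑' z, b x z * (φ x - φ z) ^ 2 := by
  have s1 : Summable fun x => φ x ^ 2 * (∑' z, b x z) := by
    refine summable_of_ne_finset_zero (s := hφ.toFinset) fun x hx => ?_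
    have : φ x = 0 := by
      by_contra h
      exact hx (hφ.mem_toFinset.mpr h)
    rw [this]; ring
  have s2 : Summable fun x => 2 * φ x * (∑' z, b x z * φ z) := by
    refine summable_of_ne_finset_zero (s := hφ.toFinset) fun x hx => ?_
    have : φ x = 0 := by
      by_contra h
      exact hx (hφ.mem_toFinset.mpr h)
    rw [this]; ring
  refine ((s1.sub s2).add (summable_q hg hφ)).congr fun x => ?_
  rw [tx_eq hg hφ x]

lemma A_real_eq (hg : IsGraph b c m) {φ : X → ℝ} (hφ : FinSupp φ) :
    (∑' x, ∑' z, b x z * (φ x - φ z) ^ 2)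
      = 2 * (pairQ b c m φ φ - ∑ x ∈ hφ.toFinset, c x * φ x ^ 2) := by
  classical
  set T := hφ.toFinset with hTdef
  have hmem : ∀ x, φ x ≠ 0 → x ∈ T := fun x h => hφ.mem_toFinset.mpr h
  have hzero : ∀ x, x ∉ T → φ x = 0 := fun x hx => by
    by_contra h
    exact hx (hmem x h)
  have s1 : Summable fun x => φ x ^ 2 * (∑' z, b x z) :=
    summable_of_ne_finset_zero (s := T) fun x hx => by rw [hzero x hx]; ring
  have s2 : Summable fun x => 2 * φ x * (∑' z, b x z * φ z) :=
    summable_of_ne_finset_zero (s := T) fun x hx => by rw [hzero x hx]; ring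
  have sq := summable_q hg hφ
  -- split the outer sum
  have hsplit : (∑' x, ∑' z, b x z * (φ x - φ z) ^ 2)
      = (∑' x, (φ x ^ 2 * (∑' z, b x z) - 2 * φ x * (∑' z, b x z * φ z)))
        + ∑' x, ∑' z, b x z * φ z ^ 2 := by
    rw [← Summable.tsum_add (s1.sub s2) sq]
    exact tsum_congr fun x => by rw [tx_eq hg hφ x]
  have hsub : (∑' x, (φ x ^ 2 * (∑' z, b x z) - 2 * φ x * (∑' z, b x z * φ z)))
      = (∑' x, φ x ^ 2 * (∑' z, b x z)) - ∑' x, 2 * φ x * (∑' z, b x z * φ z) :=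
    Summable.tsum_sub s1 s2
  have hq : (∑' x, ∑' z, b x z * φ z ^ 2) = ∑ z ∈ T, φ z ^ 2 * (∑' x, b x z) := by
    have hrw : (fun x => ∑' z, b x z * φ z ^ 2)
        = fun x => ∑ z ∈ T, b x z * φ z ^ 2 := funext fun x => by
      refine tsum_eq_sum fun z hz => by rw [hzero z hz]; ring
    rw [hrw, Summable.tsum_finsetSum (fun z _ => (hg.summable_col z).mul_right _)]
    refine Finset.sum_congr rfl fun z _ => ?_
    rw [tsum_mul_right]
    ring

  have hcol : ∀ z, (∑' x, b x z) = ∑' x, b z x := fun z => tsum_congr fun x => hg.symm x z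
  have hfin1 : (∑' x, φ x ^ 2 * (∑' z, b x z)) = ∑ x ∈ T, φ x ^ 2 * (∑' z, b x z) :=
    tsum_eq_sum fun x hx => by rw [hzero x hx]; ring
  have hfin2 : (∑' x, 2 * φ x * (∑' z, b x z * φ z))
      = ∑ x ∈ T, 2 * φ x * (∑' z, b x z * φ z) :=
    tsum_eq_sum fun x hx => by rw [hzero x hx]; ring
  have hpair : pairQ b c m φ φ
      = ∑ x ∈ T, ((∑' z, b x z) * φ x ^ 2 - (∑' z, b x z * φ z) * φ x + c x * φ x ^ 2) := by
    rw [pairQ_eq_sum hmem]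
    refine Finset.sum_congr rfl fun x _ => ?_
    rw [mlap_eq hg (memF_finsupp hg hφ) x]
    ring
  have hqq : (∑ z ∈ T, φ z ^ 2 * (∑' x, b x z)) = ∑ x ∈ T, φ x ^ 2 * (∑' z, b x z) := by
    refine Finset.sum_congr rfl fun z _ => ?_
    rw [hcol z]
  rw [hsplit, hsub, hq, hqq, hfin1, hfin2, hpair, ← Finset.sum_sub_distrib,
    ← Finset.sum_add_distrib, ← Finset.sum_sub_distrib, Finset.mul_sum]
  exact Finset.sum_congr rfl fun x _ => by ring

lemma energy_eq_pairQ (hg : IsGraph b c m) {φ : X → ℝ} (hφ : FinSupp φ) :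
    energy b c φ = ENNReal.ofReal (pairQ b c m φ φ) := by
  classical
  set T := hφ.toFinset with hTdef
  have hzero : ∀ x, x ∉ T → φ x = 0 := fun x hx => by
    by_contra h
    exact hx (hφ.mem_toFinset.mpr h)
  have hA1 : ∀ x : X, (∑' z, ENNReal.ofReal (b x z * (φ x - φ z) ^ 2))
      = ENNReal.ofReal (∑' z, b x z * (φ x - φ z) ^ 2) := fun x =>
    (ENNReal.ofReal_tsum_of_nonneg (fun z => mul_nonneg (hg.nonneg x z) (sq_nonneg _))
      (summable_b_sq hg hφ x)).symm
  have hA2 : (∑' x, ENNReal.ofReal (∑' z, b x z * (φ x - φ z) ^ 2))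
      = ENNReal.ofReal (∑' x, ∑' z, b x z * (φ x - φ z) ^ 2) :=
    (ENNReal.ofReal_tsum_of_nonneg
      (fun x => tsum_nonneg fun z => mul_nonneg (hg.nonneg x z) (sq_nonneg _))
      (summable_t hg hφ)).symm
  have hCsum : Summable fun x => c x * φ x ^ 2 :=
    summable_of_ne_finset_zero (s := T) fun x hx => by rw [hzero x hx]; ring
  have hC : (∑' x, ENNReal.ofReal (c x * φ x ^ 2))
      = ENNReal.ofReal (∑' x, c x * φ x ^ 2) :=
    (ENNReal.ofReal_tsum_of_nonneg
      (fun x => mul_nonneg (hg.c_nonneg x) (sq_nonneg _)) hCsum).symm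
  have hCreal : (∑' x, c x * φ x ^ 2) = ∑ x ∈ T, c x * φ x ^ 2 :=
    tsum_eq_sum fun x hx => by rw [hzero x hx]; ring
  have hAeq := A_real_eq hg hφ
  have hAnn : 0 ≤ ∑' x, ∑' z, b x z * (φ x - φ z) ^ 2 :=
    tsum_nonneg fun x => tsum_nonneg fun z => mul_nonneg (hg.nonneg x z) (sq_nonneg _)
  have hCs_nonneg : 0 ≤ ∑ x ∈ T, c x * φ x ^ 2 :=
    Finset.sum_nonneg fun x _ => mul_nonneg (hg.c_nonneg x) (sq_nonneg _)
  have hdiff_nonneg : 0 ≤ pairQ b c m φ φ - ∑ x ∈ T, c x * φ x ^ 2 := by nlinarith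
  unfold energy
  rw [tsum_congr hA1, hA2, hC, hCreal, hAeq]
  rw [ENNReal.ofReal_mul (by norm_num : (0:ℝ) ≤ 2)]
  rw [← mul_assoc]
  rw [show ((1 : ℝ≥0∞)/2) * ENNReal.ofReal 2 = 1 by
    rw [show ENNReal.ofReal (2:ℝ) = (2:ℝ≥0∞) by
      rw [ENNReal.ofReal_ofNat]]
    rw [one_div, ENNReal.inv_mul_cancel two_ne_zero ENNReal.ofNat_ne_top]]
  rw [one_mul, ← ENNReal.ofReal_add hdiff_nonneg hCs_nonneg]
  congr 1
  ring

end Pairing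


/-! ### Fatou's lemma for sums and the exhaustion limit -/

section Limits

variable {b : X → X → ℝ} {c m : X → ℝ}

lemma FinSupp.zero_of {ψ : X → ℝ} (hψ : FinSupp ψ) {x : X} (hx : x ∉ hψ.toFinset) :
    ψ x = 0 := by
  by_contra h
  exact hx (hψ.mem_toFinset.mpr h)

lemma FinSupp.sub {f g : X → ℝ} (hf : FinSupp f) (hg : FinSupp g) :
    FinSupp (fun x => f x - g x) := by
  refine (hf.union hg).subset fun x hx => ?_
  rcases eq_or_ne (f x) 0 with h1 | h1
  · rcases eq_or_ne (g x) 0 with h2 | h2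
    · exfalso
      have : f x - g x ≠ 0 := hx
      rw [h1, h2] at this
      simp at this
    · exact Or.inr h2
  · exact Or.inl h1

lemma spair {φ ψ : X → ℝ} (hψ : FinSupp ψ) :
    Summable fun x => m x * lap b c m φ x * ψ x :=
  summable_of_ne_finset_zero (s := hψ.toFinset) fun x hx => by
    rw [hψ.zero_of hx, mul_zero]

lemma enn_le_liminf_add {u v : ℕ → ℝ≥0∞} :
    liminf u atTop + liminf v atTop ≤ liminf (u + v) atTop := by
  rw [liminf_eq_iSup_iInf_of_nat, liminf_eq_iSup_iInf_of_nat, liminf_eq_iSup_iInf_of_nat]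
  have hmonu : Monotone fun n => ⨅ i ≥ n, u i := fun a b hab =>
    le_iInf₂ fun i hi => iInf₂_le i (hab.trans hi)
  have hmonv : Monotone fun n => ⨅ i ≥ n, v i := fun a b hab =>
    le_iInf₂ fun i hi => iInf₂_le i (hab.trans hi)
  rw [ENNReal.iSup_add_iSup (fun i j => ⟨max i j,
    add_le_add (hmonu (le_max_left i j)) (hmonv (le_max_right i j))⟩)]
  refine iSup_le fun n => le_trans ?_ (le_iSup (fun n => ⨅ i ≥ n, (u + v) i) n)
  refine le_iInf₂ fun i hi => add_le_add (iInf₂_le i hi) (iInf₂_le i hi)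

lemma tsum_le_liminf' {α : Type*} (f : ℕ → α → ℝ≥0∞) (g : α → ℝ≥0∞)
    (h : ∀ x, g x ≤ liminf (fun n => f n x) atTop) :
    ∑' x, g x ≤ liminf (fun n => ∑' x, f n x) atTop := by
  rw [ENNReal.tsum_eq_iSup_sum]
  refine iSup_le fun s => ?_
  have h1 : (∑ x ∈ s, g x) ≤ liminf (fun n => ∑ x ∈ s, f n x) atTop := by
    classical
    induction s using Finset.cons_induction with
    | empty => simp
    | cons a s' ha ih =>
      have hrw : (fun n => ∑ x ∈ Finset.cons a s' ha, f n x)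
          = (fun n => f n a) + fun n => ∑ x ∈ s', f n x := by
        funext n
        rw [Finset.sum_cons]
        rfl
      rw [Finset.sum_cons, hrw]
      calc g a + ∑ x ∈ s', g x
          ≤ liminf (fun n => f n a) atTop + liminf (fun n => ∑ x ∈ s', f n x) atTop :=
            add_le_add (h a) ih
        _ ≤ liminf ((fun n => f n a) + fun n => ∑ x ∈ s', f n x) atTop := enn_le_liminf_add
  refine h1.trans (liminf_le_liminf ?_)
  exact Eventually.of_forall fun n => ENNReal.sum_le_tsum s

/-- The Dirichlet solutions on an exhaustion converge to the Green function. -/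
lemma green_lim (hg : IsGraph b c m) {o : X} {G : X → X → ℝ}
    (hG : IsGreen b c m o G) (y : X) (K : ℕ → Finset X) (hmono : Monotone K)
    (hy : ∀ n, y ∈ K n) (hex : ∀ x : X, ∃ n, x ∈ K n)
    (v : ℕ → X → ℝ) (hv : ∀ n, DSpec b c m (K n) y (v n)) :
    ∀ x, Tendsto (fun n => v n x) atTop (𝓝 (G x y)) := by
  have hvmono : ∀ x, Monotone fun n => v n x := fun x =>
    monotone_nat_of_le_succ fun n =>
      DSpec.mono hg hG (hmono (Nat.le_succ n)) (hy n) (hv n) (hv (n + 1)) x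
  have hvle : ∀ n x, v n x ≤ G x y := fun n => (hv n).le_G hg hG (hy n)
  have hv0 : ∀ n x, 0 ≤ v n x := fun n => (hv n).nonneg hg hG
  set gt : X → ℝ := fun x => ⨆ n, v n x with hgt_def
  have hbdd : ∀ x, BddAbove (Set.range fun n => v n x) := fun x =>
    ⟨G x y, by rintro _ ⟨n, rfl⟩; exact hvle n x⟩
  have htend : ∀ x, Tendsto (fun n => v n x) atTop (𝓝 (gt x)) := fun x =>
    tendsto_atTop_ciSup (hvmono x) (hbdd x)
  have hgt_le : ∀ x, gt x ≤ G x y := fun x => ciSup_le fun n => hvle n x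
  have hgt0 : ∀ x, 0 ≤ gt x := fun x => le_trans (hv0 0 x) (le_ciSup (hbdd x) 0)
  have hgtF : MemF b gt := by
    refine memF_of_abs_le hg (fun z => ?_) (hG.memF y)
    rw [abs_of_nonneg (hgt0 z), abs_of_pos (hG.pos z y)]
    exact hgt_le z
  -- the Laplacian of the limit
  have hmlap : ∀ x, m x * lap b c m gt x = if x = y then m y else 0 := by
    intro x
    have t1 : Tendsto (fun n => m x * lap b c m (v n) x) atTop
        (𝓝 (m x * lap b c m gt x)) := by
      have hB : Tendsto (fun n => ∑' z, b x z * v n z) atTop (𝓝 (∑' z, b x z * gt z)) := by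
        refine tendsto_tsum_of_dominated_convergence (bound := fun z => b x z * G z y) ?_ ?_ ?_
        · refine (hG.memF y x).congr fun z => ?_
          rw [abs_of_pos (hG.pos z y)]
        · exact fun z => (htend z).const_mul (b x z)
        · refine Eventually.of_forall fun n z => ?_
          rw [Real.norm_eq_abs, abs_of_nonneg (mul_nonneg (hg.nonneg x z) (hv0 n z))]
          exact mul_le_mul_of_nonneg_left (hvle n z) (hg.nonneg x z)
      have t2 : Tendsto
          (fun n => (∑' z, b x z) * v n x - (∑' z, b x z * v n z) + c x * v n x) atTop
          (𝓝 ((∑' z, b x z) * gt x - (∑' z, b x z * gt z) + c x * gt x)) :=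
        (((htend x).const_mul _).sub hB).add ((htend x).const_mul _)
      have heq : (fun n => m x * lap b c m (v n) x)
          = fun n => (∑' z, b x z) * v n x - (∑' z, b x z * v n z) + c x * v n x :=
        funext fun n => mlap_eq hg ((hv n).memF hg) x
      rw [heq, mlap_eq hg hgtF x]
      exact t2
    obtain ⟨N, hN⟩ := hex x
    have t3 : ∀ᶠ n in atTop, m x * lap b c m (v n) x = if x = y then m y else 0 := by
      refine eventually_atTop.mpr ⟨N, fun n hn => ?_⟩
      exact (hv n).2 x (hmono hn hN)
    exact tendsto_nhds_unique (t1.congr' (t3.mono fun n h => h)) tendsto_const_nhds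
  have hlapgt : ∀ x, lap b c m gt x = if x = y then 1 else 0 := by
    intro x
    have hm := (hg.m_pos x).ne'
    by_cases hxy : x = y
    · subst hxy
      have := hmlap x
      rw [if_pos rfl] at this
      field_simp at this ⊢
      simpa using this
    · have := hmlap x
      rw [if_neg hxy] at this
      rw [if_neg hxy]
      rcases mul_eq_zero.mp this with h | h
      · exact absurd h hm
      · exact h
  -- evaluation of pairings
  have hPa : ∀ n mm, n ≤ mm → (∑' x, m x * lap b c m (v mm) x * v n x) = m y * v n y := by
    intro n mm hnm
    have hfun : (fun x => m x * lap b c m (v mm) x * v n x)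
        = fun x => (if x = y then m y else 0) * v n x := by
      funext x
      rcases eq_or_ne (v n x) 0 with h0 | h0
      · rw [h0, mul_zero, mul_zero]
      · have hxK : x ∈ K n := by
          by_contra hk
          exact h0 ((hv n).1 x hk)
        rw [(hv mm).2 x (hmono hnm hxK)]
    rw [hfun]
    rw [tsum_eq_single y fun x' hx' => by rw [if_neg hx', zero_mul]]
    rw [if_pos rfl]
  have hbil : ∀ n mm, n ≤ mm →
      pairQ b c m (fun x => v mm x - v n x) (fun x => v mm x - v n x)
        = m y * (v mm y - v n y) := by
    intro n mm hnm
    have hMmm := (hv mm).memF hg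
    have hMn := (hv n).memF hg
    have hpoint : ∀ x, m x * lap b c m (fun z => v mm z - v n z) x * (v mm x - v n x)
        = (m x * lap b c m (v mm) x * v mm x - m x * lap b c m (v mm) x * v n x)
          - (m x * lap b c m (v n) x * v mm x - m x * lap b c m (v n) x * v n x) := by
      intro x
      rw [lap_sub hg hMmm hMn x]
      ring
    have s1 : Summable fun x => m x * lap b c m (v mm) x * v mm x := spair (hv mm).finsupp
    have s2 : Summable fun x => m x * lap b c m (v mm) x * v n x := spair (hv n).finsupp
    have s3 : Summable fun x => m x * lap b c m (v n) x * v mm x := spair (hv mm).finsupp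
    have s4 : Summable fun x => m x * lap b c m (v n) x * v n x := spair (hv n).finsupp
    unfold pairQ
    rw [tsum_congr hpoint, Summable.tsum_sub (s1.sub s2) (s3.sub s4), Summable.tsum_sub s1 s2, Summable.tsum_sub s3 s4]
    have e1 := hPa mm mm le_rfl
    have e2 := hPa n mm hnm
    have e3 : (∑' x, m x * lap b c m (v n) x * v mm x) = m y * v n y := by
      have := pairQ_comm hg (hv n).finsupp (hv mm).finsupp
      unfold pairQ at this
      rw [this]
      exact hPa n mm hnm
    have e4 := hPa n n le_rfl
    rw [e1, e2, e3, e4]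
    ring
  have henergy : ∀ n mm, n ≤ mm →
      energy b c (fun x => v mm x - v n x) = ENNReal.ofReal (m y * (v mm y - v n y)) := by
    intro n mm hnm
    rw [energy_eq_pairQ hg ((hv mm).finsupp.sub (hv n).finsupp), hbil n mm hnm]
  -- Fatou bound for the energy of `gt - v n`
  have htwo : ∀ r : ℝ≥0∞, (2 : ℝ≥0∞) * ((1 : ℝ≥0∞)/2 * r) = r := by
    intro r
    rw [← mul_assoc, one_div, ENNReal.mul_inv_cancel two_ne_zero ENNReal.ofNat_ne_top, one_mul]
  have hfatou : ∀ n, energy b c (fun x => gt x - v n x)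
      ≤ 2 * ENNReal.ofReal (m y * (gt y - v n y)) := by
    intro n
    set Einf := ENNReal.ofReal (m y * (gt y - v n y)) with hEinf
    set A : ℕ → ℝ≥0∞ := fun mm => ∑' x, ∑' z,
      ENNReal.ofReal (b x z * ((v mm x - v n x) - (v mm z - v n z)) ^ 2) with hA_def
    set C : ℕ → ℝ≥0∞ := fun mm => ∑' x,
      ENNReal.ofReal (c x * (v mm x - v n x) ^ 2) with hC_def
    set e : ℕ → ℝ≥0∞ := fun mm => energy b c (fun x => v mm x - v n x) with he_def
    have he_split : ∀ mm, e mm = (1/2 : ℝ≥0∞) * A mm + C mm := fun mm => rfl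
    -- pointwise convergence of the ENNReal terms
    have hptA : ∀ x z, Tendsto
        (fun mm => ENNReal.ofReal (b x z * ((v mm x - v n x) - (v mm z - v n z)) ^ 2)) atTop
        (𝓝 (ENNReal.ofReal (b x z * ((gt x - v n x) - (gt z - v n z)) ^ 2))) := by
      intro x z
      have hr : Tendsto (fun mm => (v mm x - v n x) - (v mm z - v n z)) atTop
          (𝓝 ((gt x - v n x) - (gt z - v n z))) :=
        ((htend x).sub tendsto_const_nhds).sub ((htend z).sub tendsto_const_nhds)
      exact (ENNReal.continuous_ofReal.tendsto _).comp ((hr.pow 2).const_mul (b x z))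
    have hptC : ∀ x, Tendsto
        (fun mm => ENNReal.ofReal (c x * (v mm x - v n x) ^ 2)) atTop
        (𝓝 (ENNReal.ofReal (c x * (gt x - v n x) ^ 2))) := by
      intro x
      have hr : Tendsto (fun mm => v mm x - v n x) atTop (𝓝 (gt x - v n x)) :=
        (htend x).sub tendsto_const_nhds
      exact (ENNReal.continuous_ofReal.tendsto _).comp ((hr.pow 2).const_mul (c x))
    -- Fatou
    have hAfatou : (∑' x, ∑' z,
        ENNReal.ofReal (b x z * ((gt x - v n x) - (gt z - v n z)) ^ 2))
          ≤ liminf A atTop := by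
      refine tsum_le_liminf' _ _ fun x => ?_
      refine tsum_le_liminf' _ _ fun z => ?_
      exact le_of_eq ((hptA x z).liminf_eq).symm
    have hCfatou : (∑' x, ENNReal.ofReal (c x * (gt x - v n x) ^ 2))
        ≤ liminf C atTop := by
      refine tsum_le_liminf' _ _ fun x => ?_
      exact le_of_eq ((hptC x).liminf_eq).symm
    -- bounds on A mm and C mm via the energy identity
    have he_val : ∀ mm, n ≤ mm → e mm = ENNReal.ofReal (m y * (v mm y - v n y)) :=
      fun mm hmm => henergy n mm hmm
    have hA_le : ∀ mm, A mm ≤ 2 * e mm := by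
      intro mm
      rw [he_split mm]
      calc A mm = 2 * ((1/2 : ℝ≥0∞) * A mm) := (htwo _).symm
        _ ≤ 2 * ((1/2 : ℝ≥0∞) * A mm + C mm) := by
            exact mul_le_mul_right le_self_add 2
    have hC_le : ∀ mm, C mm ≤ e mm := fun mm => by
      rw [he_split mm]
      exact le_add_self
    -- limit of 2 * e mm
    have h2e : Tendsto (fun mm => 2 * e mm) atTop (𝓝 (2 * Einf)) := by
      have hreal : Tendsto (fun mm => m y * (v mm y - v n y)) atTop
          (𝓝 (m y * (gt y - v n y))) := ((htend y).sub tendsto_const_nhds).const_mul (m y)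
      have : Tendsto (fun mm => ENNReal.ofReal (2 * (m y * (v mm y - v n y)))) atTop
          (𝓝 (ENNReal.ofReal (2 * (m y * (gt y - v n y))))) :=
        (ENNReal.continuous_ofReal.tendsto _).comp (hreal.const_mul 2)
      have hco : ∀ r : ℝ, ENNReal.ofReal (2 * r) = 2 * ENNReal.ofReal r := by
        intro r
        rw [ENNReal.ofReal_mul (by norm_num : (0:ℝ) ≤ 2), ENNReal.ofReal_ofNat]
      rw [hco] at this
      refine Tendsto.congr' ?_ this
      refine eventually_atTop.mpr ⟨n, fun mm hmm => ?_⟩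
      simp only [he_val mm hmm]
      exact hco _
    have he_lim : Tendsto e atTop (𝓝 Einf) := by
      have hreal : Tendsto (fun mm => m y * (v mm y - v n y)) atTop
          (𝓝 (m y * (gt y - v n y))) := ((htend y).sub tendsto_const_nhds).const_mul (m y)
      have : Tendsto (fun mm => ENNReal.ofReal (m y * (v mm y - v n y))) atTop (𝓝 Einf) :=
        (ENNReal.continuous_ofReal.tendsto _).comp hreal
      refine Tendsto.congr' ?_ this
      exact eventually_atTop.mpr ⟨n, fun mm hmm => by simp only [he_val mm hmm]⟩
    have hAlim : liminf A atTop ≤ 2 * Einf := by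
      have h1 : liminf A atTop ≤ liminf (fun mm => 2 * e mm) atTop :=
        liminf_le_liminf (Eventually.of_forall hA_le)
      rw [h2e.liminf_eq] at h1
      exact h1
    have hClim : liminf C atTop ≤ Einf := by
      have h1 : liminf C atTop ≤ liminf e atTop :=
        liminf_le_liminf (Eventually.of_forall hC_le)
      rw [he_lim.liminf_eq] at h1
      exact h1
    calc energy b c (fun x => gt x - v n x)
        = (1/2 : ℝ≥0∞) * (∑' x, ∑' z,
            ENNReal.ofReal (b x z * ((gt x - v n x) - (gt z - v n z)) ^ 2))
          + ∑' x, ENNReal.ofReal (c x * (gt x - v n x) ^ 2) := rfl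
      _ ≤ (1/2 : ℝ≥0∞) * (2 * Einf) + Einf := by
          exact add_le_add (mul_le_mul_right (hAfatou.trans hAlim) _) (hCfatou.trans hClim)
      _ ≤ 2 * Einf := by
          rw [show (1/2 : ℝ≥0∞) * (2 * Einf) = (1/2 * 2) * Einf by rw [mul_assoc]]
          rw [show ((1:ℝ≥0∞)/2) * 2 = 1 by
            rw [one_div, ENNReal.inv_mul_cancel two_ne_zero ENNReal.ofNat_ne_top]]
          rw [one_mul, two_mul]
  -- membership in 𝓓₀
  have hmemD0 : MemD0 b c o gt := by
    refine ⟨v, fun n => (hv n).finsupp, ?_⟩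
    have hub : Tendsto (fun n => 2 * ENNReal.ofReal (m y * (gt y - v n y))
        + ENNReal.ofReal ((gt o - v n o) ^ 2)) atTop (𝓝 0) := by
      have h1 : Tendsto (fun n => m y * (gt y - v n y)) atTop (𝓝 0) := by
        have h0 := (htend y).const_sub (gt y)
        rw [sub_self] at h0
        have := h0.const_mul (m y)
        simpa using this
      have h2 : Tendsto (fun n => (gt o - v n o) ^ 2) atTop (𝓝 0) := by
        have h0 := (htend o).const_sub (gt o)
        rw [sub_self] at h0
        have := h0.pow 2
        simpa using this
      have h1' : Tendsto (fun n => 2 * ENNReal.ofReal (m y * (gt y - v n y))) atTop (𝓝 0) := by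
        have := (ENNReal.continuous_ofReal.tendsto _).comp h1
        rw [ENNReal.ofReal_zero] at this
        have h2' := ENNReal.Tendsto.const_mul (a := 2) this (Or.inr ENNReal.ofNat_ne_top)
        simpa using h2'
      have h2' : Tendsto (fun n => ENNReal.ofReal ((gt o - v n o) ^ 2)) atTop (𝓝 0) := by
        have := (ENNReal.continuous_ofReal.tendsto _).comp h2
        rwa [ENNReal.ofReal_zero] at this
      have := h1'.add h2'
      simpa using this
    refine tendsto_of_tendsto_of_tendsto_of_le_of_le tendsto_const_nhds hub
      (fun n => zero_le) fun n => ?_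
    exact add_le_add (hfatou n) le_rfl
  -- conclusion via uniqueness
  have hgt_eq : gt = fun x => G x y := hG.unique y gt hgtF hmemD0 hlapgt
  intro x
  have := htend x
  rwa [show gt x = G x y from congrFun hgt_eq x] at this

end Limits


/-! ### Sums of functions -/

section Sums

variable {b : X → X → ℝ} {c m : X → ℝ}

lemma lap_zero (x : X) : lap b c m (fun _ => (0 : ℝ)) x = 0 := by
  unfold lap
  simp

lemma memF_finsum (hg : IsGraph b c m) {ι : Type*} {F : Finset ι} {g : ι → X → ℝ}
    (h : ∀ i ∈ F, MemF b (g i)) : MemF b fun z => ∑ i ∈ F, g i z := by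
  classical
  induction F using Finset.cons_induction with
  | empty => simpa using memF_zero hg
  | cons a s' ha ih =>
    have h1 : MemF b (g a) := h a (Finset.mem_cons_self a s')
    have h2 : MemF b fun z => ∑ i ∈ s', g i z := ih fun i hi => h i (Finset.mem_cons_of_mem hi)
    have := memF_add hg h1 h2
    refine fun x => (this x).congr fun z => ?_
    simp only [Finset.sum_cons]

lemma lap_finsum (hg : IsGraph b c m) {ι : Type*} {F : Finset ι} {g : ι → X → ℝ}
    (h : ∀ i ∈ F, MemF b (g i)) (x : X) :
    lap b c m (fun z => ∑ i ∈ F, g i z) x = ∑ i ∈ F, lap b c m (g i) x := by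
  classical
  induction F using Finset.cons_induction with
  | empty => simpa using lap_zero x
  | cons a s' ha ih =>
    have h1 : MemF b (g a) := h a (Finset.mem_cons_self a s')
    have h2 : MemF b fun z => ∑ i ∈ s', g i z :=
      memF_finsum hg fun i hi => h i (Finset.mem_cons_of_mem hi)
    have key : lap b c m (fun z => g a z + ∑ i ∈ s', g i z) x
        = lap b c m (g a) x + lap b c m (fun z => ∑ i ∈ s', g i z) x := lap_add hg h1 h2 x
    have hfun : (fun z => ∑ i ∈ Finset.cons a s' ha, g i z)
        = fun z => g a z + ∑ i ∈ s', g i z := funext fun z => Finset.sum_cons ha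
    rw [hfun, key, ih fun i hi => h i (Finset.mem_cons_of_mem hi), Finset.sum_cons]

end Sums

/-- Proposition 2.7. If `u ∈ C₀(X) ∩ 𝓕` is superharmonic on a
connected transient graph, then `u` is a potential. -/
theorem stmt7 {X : Type*} [Countable X] (b : X → X → ℝ) (c m : X → ℝ) (o : X)
    (G : X → X → ℝ) (hg : IsGraph b c m) (hG : IsGreen b c m o G)
    (u : X → ℝ) (hC0 : MemC0 u) (hsup : Superharmonic b c m u) :
    IsPotential b c m G u := by
  classical
  haveI : Nonempty X := ⟨o⟩
  obtain ⟨huF, hk⟩ := hsup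
  set k : X → ℝ := fun x => lap b c m u x with hk_def
  have hu0 : ∀ x, 0 ≤ u x := nonneg_of_superharmonic_C0 hg hG huF hC0 hk
  obtain ⟨E, hE⟩ := exists_surjective_nat X
  -- Step B : partial sums of the Green potential are dominated by u
  have hpartial : ∀ (x : X) (F : Finset X), (∑ y ∈ F, k y * G x y) ≤ u x := by
    intro x F
    set KK : ℕ → Finset X := fun n => (Finset.range (n + 1)).image E ∪ F with hKK
    have hmono : Monotone KK := by
      intro a bb hab
      refine Finset.union_subset_union ?_ le_rfl
      exact Finset.image_subset_image (Finset.range_subset_range.mpr (by omega))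
    have hex : ∀ z : X, ∃ n, z ∈ KK n := by
      intro z
      obtain ⟨j, hj⟩ := hE z
      exact ⟨j, Finset.mem_union_left _ (Finset.mem_image.mpr
        ⟨j, Finset.mem_range.mpr (by omega), hj⟩)⟩
    have hyF : ∀ y ∈ F, ∀ n, y ∈ KK n := fun y hy n => Finset.mem_union_right _ hy
    have hch : ∀ y : X, ∀ n : ℕ, ∃ v, DSpec b c m (KK n) y v := fun y n =>
      exists_dsol hg hG (KK n) y
    choose v hv using hch
    have htd : ∀ y ∈ F, ∀ z, Tendsto (fun n => v y n z) atTop (𝓝 (G z y)) := fun y hy =>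
      green_lim hg hG y KK hmono (hyF y hy) hex (v y) (hv y)
    -- domination at level n
    have hdom : ∀ n z, (∑ y ∈ F, k y * v y n z) ≤ u z := by
      intro n
      set f : X → ℝ := fun z => u z - ∑ y ∈ F, k y * v y n z with hf_def
      have hmemS : ∀ y ∈ F, MemF b fun z => k y * v y n z :=
        fun y _ => memF_smul hg (k y) ((hv y n).memF hg)
      have hfF : MemF b f := memF_sub hg huF (memF_finsum hg hmemS)
      have hcomp := compare hg hG hfF (KK n) (fun z hz => ?_) (fun z hz _ => ?_)
      · intro z
        have h := hcomp z
        linarith [show (0:ℝ) ≤ u z - ∑ y ∈ F, k y * v y n z from h]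
      · -- outside KK n : f z = u z ≥ 0
        have hzero : (∑ y ∈ F, k y * v y n z) = 0 := by
          refine Finset.sum_eq_zero fun y hy => ?_
          rw [(hv y n).1 z hz, mul_zero]
        rw [hf_def]
        simp only [hzero, sub_zero]
        exact hu0 z
      · -- on KK n : m z * lap f z ≥ 0
        have hlap1 : lap b c m f z = k z - ∑ y ∈ F, k y * lap b c m (v y n) z := by
          rw [hf_def]
          rw [lap_sub hg huF (memF_finsum hg hmemS) z, lap_finsum hg hmemS z]
          rw [Finset.sum_congr rfl fun y hy => lap_smul hg (k y) ((hv y n).memF hg) z]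
        have hsum_ite : (∑ y ∈ F, k y * (m z * lap b c m (v y n) z))
            = if z ∈ F then k z * m z else 0 := by
          have : ∀ y ∈ F, k y * (m z * lap b c m (v y n) z)
              = if y = z then k y * m y else 0 := by
            intro y hy
            rw [(hv y n).2 z hz]
            by_cases hzy : z = y
            · subst hzy
              rw [if_pos rfl, if_pos rfl]
            · rw [if_neg hzy, if_neg (Ne.symm hzy), mul_zero]
          rw [Finset.sum_congr rfl this, Finset.sum_ite_eq' F z fun y => k y * m y]
        have : m z * lap b c m f z = m z * k z - ∑ y ∈ F, k y * (m z * lap b c m (v y n) z) := by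
          rw [hlap1, mul_sub, Finset.mul_sum]
          congr 1
          exact Finset.sum_congr rfl fun y _ => by ring
        rw [this, hsum_ite]
        by_cases hzF : z ∈ F
        · rw [if_pos hzF]
          have := hk z
          nlinarith [hg.m_pos z, hk z]
        · rw [if_neg hzF]
          simp only [sub_zero]
          exact mul_nonneg (hg.m_pos z).le (hk z)
    -- pass to the limit
    have hlim : Tendsto (fun n => ∑ y ∈ F, k y * v y n x) atTop
        (𝓝 (∑ y ∈ F, k y * G x y)) := by
      refine tendsto_finset_sum F fun y hy => ?_
      exact ((htd y hy) x).const_mul (k y)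
    exact le_of_tendsto hlim (Eventually.of_forall fun n => hdom n x)
  -- membership in 𝓖 and the Green potential
  have hk0 : ∀ y, 0 ≤ k y := hk
  have hsumm : ∀ x, Summable fun y => G x y * k y := by
    intro x
    refine summable_of_sum_le (c := u x) (fun y => mul_nonneg (hG.pos x y).le (hk0 y))
      fun F => ?_
    calc (∑ y ∈ F, G x y * k y) = ∑ y ∈ F, k y * G x y :=
          Finset.sum_congr rfl fun y _ => by ring
      _ ≤ u x := hpartial x F
  have hGk_le : ∀ x, Gop G k x ≤ u x := by
    intro x
    refine Summable.tsum_le_of_sum_le (hsumm x) fun F => ?_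
    calc (∑ y ∈ F, G x y * k y) = ∑ y ∈ F, k y * G x y :=
          Finset.sum_congr rfl fun y _ => by ring
      _ ≤ u x := hpartial x F
  have hGk0 : ∀ x, 0 ≤ Gop G k x := fun x =>
    tsum_nonneg fun y => mul_nonneg (hG.pos x y).le (hk0 y)
  have hGkF : MemF b (Gop G k) := by
    refine memF_of_abs_le hg (fun z => ?_) huF
    rw [abs_of_nonneg (hGk0 z), abs_of_nonneg (hu0 z)]
    exact hGk_le z
  -- the Laplacian of the Green potential
  have hlapGk : ∀ x, lap b c m (Gop G k) x = k x := by
    intro x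
    have hbu : Summable fun z => b x z * u z := memF_summable hg huF x
    have hS1 : Summable fun z => b x z * Gop G k z :=
      Summable.of_nonneg_of_le (fun z => mul_nonneg (hg.nonneg x z) (hGk0 z))
        (fun z => mul_le_mul_of_nonneg_left (hGk_le z) (hg.nonneg x z)) hbu
    have hnn : 0 ≤ (Function.uncurry fun z y2 => b x z * (G z y2 * k y2)) := by
      intro p
      exact mul_nonneg (hg.nonneg x p.1) (mul_nonneg (hG.pos p.1 p.2).le (hk0 p.2))
    have hrows : ∀ z, Summable fun y2 => b x z * (G z y2 * k y2) := fun z =>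
      (hsumm z).mul_left (b x z)
    have hGkz : ∀ z, b x z * Gop G k z = ∑' y2, b x z * (G z y2 * k y2) := by
      intro z
      exact ((hsumm z).tsum_mul_left (b x z)).symm
    have hrowsums : Summable fun z => ∑' y2, b x z * (G z y2 * k y2) :=
      hS1.congr fun z => hGkz z
    have hprod : Summable (Function.uncurry fun z y2 => b x z * (G z y2 * k y2)) := by
      refine (summable_prod_of_nonneg hnn).mpr ⟨?_, ?_⟩
      · exact fun z => hrows z
      · exact hrowsums
    have hcols : ∀ y2, Summable fun z => b x z * (G z y2 * k y2) := by
      intro y2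
      have hbG : Summable fun z => b x z * G z y2 := memF_summable hg (hG.memF y2) x
      exact (hbG.mul_right (k y2)).congr fun z => by ring
    have hswap : (∑' z, ∑' y2, b x z * (G z y2 * k y2))
        = ∑' y2, ∑' z, b x z * (G z y2 * k y2) :=
      (Summable.tsum_comm' hprod hrows hcols).symm
    have hinner : ∀ y2, (∑' z, b x z * G z y2)
        = (∑' z, b x z) * G x y2 + c x * G x y2 - m x * (if x = y2 then 1 else 0) := by
      intro y2
      have h1 := mlap_eq hg (hG.memF y2) x
      rw [hG.lap_eq y2 x] at h1
      linarith [h1]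
    have hpull : ∀ y2, (∑' z, b x z * (G z y2 * k y2)) = (∑' z, b x z * G z y2) * k y2 := by
      intro y2
      have hbG : Summable fun z => b x z * G z y2 := memF_summable hg (hG.memF y2) x
      rw [← tsum_mul_right]
      exact tsum_congr fun z => by ring
    have t1 : Summable fun y2 => ((∑' z, b x z) + c x) * (G x y2 * k y2) :=
      (hsumm x).mul_left _
    have t2 : Summable fun y2 => m x * (if x = y2 then 1 else 0) * k y2 := by
      refine summable_of_ne_finset_zero (s := {x}) fun y2 hy2 => ?_
      have hxy : x ≠ y2 := fun h => hy2 (Finset.mem_singleton.mpr h.symm)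
      rw [if_neg hxy]
      ring
    have hsum2 : (∑' y2, (∑' z, b x z * G z y2) * k y2)
        = ((∑' z, b x z) + c x) * Gop G k x - m x * k x := by
      have hcongr : ∀ y2, (∑' z, b x z * G z y2) * k y2
          = ((∑' z, b x z) + c x) * (G x y2 * k y2)
            - m x * (if x = y2 then 1 else 0) * k y2 := by
        intro y2
        rw [hinner y2]
        ring
      rw [tsum_congr hcongr, Summable.tsum_sub t1 t2]
      have e1 : (∑' y2, ((∑' z, b x z) + c x) * (G x y2 * k y2))
          = ((∑' z, b x z) + c x) * Gop G k x := (hsumm x).tsum_mul_left _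
      have e2 : (∑' y2, m x * (if x = y2 then 1 else 0) * k y2) = m x * k x := by
        rw [tsum_eq_single x fun y2 hy2 => by
          rw [if_neg (fun h => hy2 (h.symm : y2 = x))]; ring]
        rw [if_pos rfl, mul_one]
      rw [e1, e2]
    have hmain : m x * lap b c m (Gop G k) x = m x * k x := by
      rw [mlap_eq hg hGkF x]
      rw [show (∑' z, b x z * Gop G k z) = ∑' z, ∑' y2, b x z * (G z y2 * k y2)
        from tsum_congr hGkz]
      rw [hswap, tsum_congr hpull, hsum2]
      ring
    exact mul_left_cancel₀ (hg.m_pos x).ne' hmain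
  -- conclusion via the minimum principle
  have hhF : MemF b fun x => u x - Gop G k x := memF_sub hg huF hGkF
  have hlaph : ∀ x, lap b c m (fun z => u z - Gop G k z) x = 0 := by
    intro x
    rw [lap_sub hg huF hGkF x, hlapGk x]
    simp [hk_def]
  have hhC0 : MemC0 fun x => -(u x - Gop G k x) := by
    intro ε hε
    refine (hC0 ε hε).subset fun x hx => ?_
    have h1 : |-(u x - Gop G k x)| = u x - Gop G k x := by
      rw [abs_neg, abs_of_nonneg (by linarith [hGk_le x])]
    have h2 : ε ≤ |-(u x - Gop G k x)| := hx
    rw [h1] at h2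
    have : ε ≤ |u x| := by
      rw [abs_of_nonneg (hu0 x)]
      linarith [hGk0 x]
    exact this
  have hhneg : ∀ x, 0 ≤ -(u x - Gop G k x) := by
    refine nonneg_of_superharmonic_C0 hg hG (memF_neg hg hhF) hhC0 fun x => ?_
    rw [lap_neg hg hhF x, hlaph x]
    simp
  have hueq : u = Gop G k := by
    funext x
    have h1 := hhneg x
    have h2 := hGk_le x
    linarith
  exact ⟨huF, fun x => (hsumm x).congr fun y => by
    rw [abs_of_nonneg (hk0 y)], hueq⟩

end HG
end
end

section
/- Let (b,c) be a connected graph over (X,m) and u ∈ C₀(X) ∩ 𝓕 with 𝓛u ∈ ℓ¹(X,m). Then u ∈ 𝓓₀ and 𝓠(u) = ∑_x m(x) u(x) 𝓛u(x); in particular 𝓠(u) ≤ ‖u‖_∞ · ∑_x m(x)|𝓛u(x)|. -/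
open Filter MeasureTheory Topology
open scoped ENNReal NNReal

noncomputable section

namespace HG

variable {X : Type*}

open scoped Classical

private lemma sum_ofReal_eq {ι : Type*} {f : ι → ℝ} (h : ∀ i, 0 ≤ f i) (hs : Summable f) :
    ∑' i, ENNReal.ofReal (f i) = ENNReal.ofReal (∑' i, f i) :=
  (ENNReal.ofReal_tsum_of_nonneg h hs).symm

private lemma summable_of_sum_ofReal_ne_top {ι : Type*} {f : ι → ℝ} (h : ∀ i, 0 ≤ f i)
    (hf : ∑' i, ENNReal.ofReal (f i) ≠ ⊤) : Summable f := by
  have h1 : Summable fun i => (f i).toNNReal := by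
    rw [← ENNReal.tsum_coe_ne_top_iff_summable]
    exact hf
  exact (NNReal.summable_coe.mpr h1).congr fun i => Real.coe_toNNReal _ (h i)

private lemma tsum_iSup_of_monotone {ι : Type*} {F : ℕ → ι → ℝ≥0∞} (hm : ∀ i, Monotone (F · i)) :
    ∑' i, ⨆ k, F k i = ⨆ k, ∑' i, F k i := by
  refine le_antisymm ?_ (iSup_le fun k => ENNReal.tsum_le_tsum fun i => le_iSup (F · i) k)
  rw [ENNReal.tsum_eq_iSup_sum]
  refine iSup_le fun s => ?_
  rw [ENNReal.finsetSum_iSup_of_monotone fun i => hm i]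
  exact iSup_mono fun k => ENNReal.sum_le_tsum s

private def tr (ε t : ℝ) : ℝ := t - max (-ε) (min ε t)

private lemma tr_sub_bounds (ε : ℝ) {s t : ℝ} (hst : s ≤ t) :
    0 ≤ tr ε t - tr ε s ∧ tr ε t - tr ε s ≤ t - s := by
  simp only [tr, max_def, min_def]
  split_ifs <;> constructor <;> linarith

private lemma tr_anti {ε₁ ε₂ : ℝ} (hε : 0 ≤ ε₁) (hee : ε₁ ≤ ε₂) {s t : ℝ} (hst : s ≤ t) :
    tr ε₂ t - tr ε₂ s ≤ tr ε₁ t - tr ε₁ s := by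
  simp only [tr, max_def, min_def]
  split_ifs <;> linarith

private lemma tr_zero_of_abs_le {ε t : ℝ} (h : |t| ≤ ε) : tr ε t = 0 := by
  rw [abs_le] at h
  simp only [tr, max_def, min_def]
  split_ifs <;> linarith

private lemma tr_dist {ε : ℝ} (hε : 0 ≤ ε) (t : ℝ) : |t - tr ε t| ≤ ε := by
  rw [abs_le]
  simp only [tr, max_def, min_def]
  split_ifs <;> constructor <;> linarith



private lemma energy_eq_ofReal {X : Type*} (b : X → X → ℝ) (c : X → ℝ) (f : X → ℝ)
    (hb : ∀ x y, 0 ≤ b x y) (hc : ∀ x, 0 ≤ c x)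
    (h1 : Summable fun p : X × X => b p.1 p.2 * (f p.1 - f p.2) ^ 2)
    (h2 : Summable fun x => c x * f x ^ 2) :
    energy b c f = ENNReal.ofReal
      (2⁻¹ * (∑' p : X × X, b p.1 p.2 * (f p.1 - f p.2) ^ 2) + ∑' x, c x * f x ^ 2) := by
  have hpnn : ∀ p : X × X, 0 ≤ b p.1 p.2 * (f p.1 - f p.2) ^ 2 := fun p =>
    mul_nonneg (hb _ _) (sq_nonneg _)
  have hcnn : ∀ x, 0 ≤ c x * f x ^ 2 := fun x => mul_nonneg (hc x) (sq_nonneg _)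
  rw [energy,
    ← ENNReal.tsum_prod (f := fun x y => ENNReal.ofReal (b x y * (f x - f y) ^ 2)),
    sum_ofReal_eq hpnn h1, sum_ofReal_eq hcnn h2,
    ENNReal.ofReal_add (mul_nonneg (by norm_num) (tsum_nonneg hpnn)) (tsum_nonneg hcnn),
    ENNReal.ofReal_mul (by norm_num : (0:ℝ) ≤ 2⁻¹)]
  have h12 : ENNReal.ofReal (2⁻¹:ℝ) = 1/2 := by
    rw [ENNReal.ofReal_inv_of_pos two_pos, one_div, ENNReal.ofReal_ofNat]
  rw [h12]

/-- Proposition 2.10. If `u ∈ C₀(X) ∩ 𝓕` with `𝓛u ∈ ℓ¹(X,m)`,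
then `u ∈ 𝓓₀` and `𝓠(u) = ∑_x m(x) u(x) 𝓛u(x)`; in particular
`𝓠(u) ≤ ‖u‖_∞ ‖𝓛u‖₁`. -/
theorem stmt9 {X : Type*} [Countable X] (b : X → X → ℝ) (c m : X → ℝ) (o : X)
    (hg : IsGraph b c m) (u : X → ℝ) (hC0 : MemC0 u) (huF : MemF b u)
    (hl1 : Summable fun x => m x * |lap b c m u x|) :
    MemD0 b c o u ∧
    (energy b c u).toReal = ∑' x, m x * u x * lap b c m u x ∧
    (energy b c u).toReal ≤ (⨆ x, |u x|) * ∑' x, m x * |lap b c m u x| := by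
  classical
  obtain ⟨hsymm, hnn, hloop, hdeg, hcnn, hmpos, -⟩ := hg
  have habs_sub : ∀ a a' : ℝ, |a - a'| ≤ |a| + |a'| := fun a a' => by
    calc |a - a'| = |a + -a'| := by ring_nf
      _ ≤ |a| + |-a'| := abs_add_le _ _
      _ = |a| + |a'| := by rw [abs_neg]
  set L : X → ℝ := fun x => (∑' y, b x y * (u x - u y)) + c x * u x with hL
  have hmlap : ∀ x, m x * lap b c m u x = L x := by
    intro x
    have hm := (hmpos x).ne'
    simp only [lap, hL]
    field_simp
  have habsL : Summable fun x => |L x| := by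
    refine hl1.congr fun x => ?_
    rw [← hmlap x, abs_mul, abs_of_pos (hmpos x)]
  -- summability of the defining sums
  have hTsum : ∀ x, Summable fun y => b x y * (u x - u y) := by
    intro x
    rw [← summable_abs_iff]
    refine Summable.of_nonneg_of_le (fun y => abs_nonneg _) (fun y => ?_)
      (((hdeg x).mul_right |u x|).add (huF x))
    rw [abs_mul, abs_of_nonneg (hnn x y)]
    calc b x y * |u x - u y| ≤ b x y * (|u x| + |u y|) :=
          mul_le_mul_of_nonneg_left (habs_sub _ _) (hnn x y)
      _ = b x y * |u x| + b x y * |u y| := by ring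
  have hTsum' : ∀ y, Summable fun x => b x y * (u x - u y) := by
    intro y
    rw [← summable_abs_iff]
    refine Summable.of_nonneg_of_le (fun x => abs_nonneg _) (fun x => ?_)
      ((huF y).add ((hdeg y).mul_right |u y|))
    rw [abs_mul, abs_of_nonneg (hnn x y), hsymm x y]
    calc b y x * |u x - u y| ≤ b y x * (|u x| + |u y|) :=
          mul_le_mul_of_nonneg_left (habs_sub _ _) (hnn y x)
      _ = b y x * |u x| + b y x * |u y| := by ring
  set T : X → ℝ := fun x => ∑' y, b x y * (u x - u y) with hT
  have hT_neg : ∀ y, ∑' x, b x y * (u x - u y) = - T y := by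
    intro y
    rw [hT, ← tsum_neg]
    exact tsum_congr fun x => by rw [hsymm x y]; ring
  have hNc : Nonempty X := ⟨o⟩
  have hbdd : BddAbove (Set.range fun x => |u x|) := by
    obtain ⟨B, hB⟩ := ((hC0 1 one_pos).image fun x => |u x|).bddAbove
    refine ⟨max 1 B, ?_⟩
    rintro r ⟨x, rfl⟩
    rcases le_or_gt 1 |u x| with h | h
    · exact le_max_of_le_right (hB (Set.mem_image_of_mem _ h))
    · exact le_max_of_le_left h.le
  have hS : ∀ x, |u x| ≤ ⨆ x, |u x| := fun x => le_ciSup hbdd x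
  have hS0 : (0:ℝ) ≤ ⨆ x, |u x| := le_trans (abs_nonneg (u o)) (hS o)
  set S : ℝ := ⨆ x, |u x| with hSdef
  set N : ℝ := ∑' x, |L x| with hNdef
  -- Green's formula for finitely supported test functions
  have green : ∀ v : X → ℝ, FinSupp v →
      Summable (fun p : X × X => b p.1 p.2 * (u p.1 - u p.2) * (v p.1 - v p.2)) ∧
      ∑' x, v x * L x =
        2⁻¹ * (∑' p : X × X, b p.1 p.2 * (u p.1 - u p.2) * (v p.1 - v p.2))
          + ∑' x, c x * u x * v x := by
    intro v hv
    set s : Finset X := hv.toFinset with hsdef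
    have hvs : ∀ x, x ∉ s → v x = 0 := by
      intro x hx
      by_contra h
      exact hx (hv.mem_toFinset.mpr h)
    have hf1 : Summable fun p : X × X => v p.1 * (b p.1 p.2 * (u p.1 - u p.2)) := by
      rw [← summable_abs_iff]
      apply (summable_prod_of_nonneg (fun p => abs_nonneg _)).mpr
      constructor
      · intro x
        exact ((hTsum x).abs.mul_left |v x|).congr fun y => (abs_mul _ _).symm
      · apply summable_of_finite_support
        refine hv.subset fun x hx => ?_
        by_contra hxx
        exact (Function.mem_support.mp hx)
          (by simp [Function.notMem_support.mp hxx])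
    have hf2 : Summable fun p : X × X => b p.1 p.2 * (u p.1 - u p.2) * v p.2 := by
      rw [← summable_abs_iff]
      apply (summable_prod_of_nonneg (fun p => abs_nonneg _)).mpr
      refine ⟨fun x => ?_, ?_⟩
      · apply summable_of_finite_support
        refine hv.subset fun y hy => ?_
        by_contra hyy
        exact (Function.mem_support.mp hy)
          (by simp [Function.notMem_support.mp hyy])
      · have hterm : ∀ y ∈ s, Summable fun x => |b x y * (u x - u y) * v y| := fun y _ =>
          ((hTsum' y).abs.mul_right |v y|).congr fun x => (abs_mul _ _).symm
        refine (summable_sum hterm).congr fun x => ?_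
        exact (tsum_eq_sum fun y hy => by simp [hvs y hy]).symm
    have hcross : Summable (fun p : X × X =>
        b p.1 p.2 * (u p.1 - u p.2) * (v p.1 - v p.2)) :=
      (hf1.sub hf2).congr fun p => by ring
    refine ⟨hcross, ?_⟩
    have hsum1 : ∑' p : X × X, v p.1 * (b p.1 p.2 * (u p.1 - u p.2)) = ∑ x ∈ s, v x * T x := by
      rw [Summable.tsum_prod hf1]
      calc ∑' x, ∑' y, v x * (b x y * (u x - u y)) = ∑' x, v x * T x :=
            tsum_congr fun x => by rw [hT, tsum_mul_left]
        _ = ∑ x ∈ s, v x * T x := tsum_eq_sum fun x hx => by simp [hvs x hx]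
    have hsum2 : ∑' p : X × X, b p.1 p.2 * (u p.1 - u p.2) * v p.2 = -∑ x ∈ s, v x * T x := by
      rw [Summable.tsum_prod hf2]
      calc ∑' x, ∑' y, b x y * (u x - u y) * v y
          = ∑' x, ∑ y ∈ s, b x y * (u x - u y) * v y :=
            tsum_congr fun x => tsum_eq_sum fun y hy => by simp [hvs y hy]
        _ = ∑ y ∈ s, ∑' x, b x y * (u x - u y) * v y :=
            Summable.tsum_finsetSum fun y _ => (hTsum' y).mul_right (v y)
        _ = ∑ y ∈ s, -(v y * T y) := by
            refine Finset.sum_congr rfl fun y _ => ?_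
            rw [tsum_mul_right, hT_neg y]; ring
        _ = -∑ x ∈ s, v x * T x := by rw [Finset.sum_neg_distrib]
    have hc_term : ∑' x, c x * u x * v x = ∑ x ∈ s, c x * u x * v x :=
      tsum_eq_sum fun x hx => by simp [hvs x hx]
    have hcr : ∑' p : X × X, b p.1 p.2 * (u p.1 - u p.2) * (v p.1 - v p.2)
        = 2 * ∑ x ∈ s, v x * T x := by
      calc ∑' p : X × X, b p.1 p.2 * (u p.1 - u p.2) * (v p.1 - v p.2)
          = ∑' p : X × X, (v p.1 * (b p.1 p.2 * (u p.1 - u p.2))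
              - b p.1 p.2 * (u p.1 - u p.2) * v p.2) := tsum_congr fun p => by ring
        _ = (∑' p : X × X, v p.1 * (b p.1 p.2 * (u p.1 - u p.2)))
              - ∑' p : X × X, b p.1 p.2 * (u p.1 - u p.2) * v p.2 := Summable.tsum_sub hf1 hf2
        _ = ∑ x ∈ s, v x * T x - -∑ x ∈ s, v x * T x := by rw [hsum1, hsum2]
        _ = 2 * ∑ x ∈ s, v x * T x := by ring
    have hlhs : ∑' x, v x * L x = ∑ x ∈ s, v x * L x :=
      tsum_eq_sum fun x hx => by simp [hvs x hx]
    rw [hlhs, hc_term, hcr]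
    have hLx : ∀ x, v x * L x = v x * T x + c x * u x * v x := fun x => by
      simp only [hL, hT]; ring
    calc ∑ x ∈ s, v x * L x = ∑ x ∈ s, (v x * T x + c x * u x * v x) :=
          Finset.sum_congr rfl fun x _ => hLx x
      _ = ∑ x ∈ s, v x * T x + ∑ x ∈ s, c x * u x * v x := Finset.sum_add_distrib
      _ = 2⁻¹ * (2 * ∑ x ∈ s, v x * T x) + ∑ x ∈ s, c x * u x * v x := by ring
  -- pointwise truncation facts
  have key_sq_le_cross : ∀ (ε a a' : ℝ), (tr ε a - tr ε a') ^ 2 ≤ (a - a') * (tr ε a - tr ε a') := by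
    have H : ∀ (ε a a' : ℝ), a' ≤ a → (tr ε a - tr ε a') ^ 2 ≤ (a - a') * (tr ε a - tr ε a') := by
      intro ε a a' h
      obtain ⟨h0, h1⟩ := tr_sub_bounds ε h
      nlinarith
    intro ε a a'
    rcases le_total a' a with h | h
    · exact H ε a a' h
    · have := H ε a' a h; nlinarith
  have key_abs : ∀ (ε a a' : ℝ), |tr ε a - tr ε a'| ≤ |a - a'| := by
    intro ε a a'
    rcases le_total a' a with h | h
    · obtain ⟨h0, h1⟩ := tr_sub_bounds ε h
      rw [abs_of_nonneg h0, abs_of_nonneg (by linarith : (0:ℝ) ≤ a - a')]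
      exact h1
    · obtain ⟨h0, h1⟩ := tr_sub_bounds ε h
      rw [abs_sub_comm, abs_sub_comm a a', abs_of_nonneg h0,
        abs_of_nonneg (by linarith : (0:ℝ) ≤ a' - a)]
      exact h1
  have key_sq_mono : ∀ (ε₁ ε₂ a a' : ℝ), 0 ≤ ε₁ → ε₁ ≤ ε₂ →
      (tr ε₂ a - tr ε₂ a') ^ 2 ≤ (tr ε₁ a - tr ε₁ a') ^ 2 := by
    have H : ∀ (ε₁ ε₂ a a' : ℝ), 0 ≤ ε₁ → ε₁ ≤ ε₂ → a' ≤ a →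
        (tr ε₂ a - tr ε₂ a') ^ 2 ≤ (tr ε₁ a - tr ε₁ a') ^ 2 := by
      intro ε₁ ε₂ a a' hε hee h
      have h2 := tr_anti hε hee h
      have h0 := (tr_sub_bounds ε₂ h).1
      nlinarith
    intro ε₁ ε₂ a a' hε hee
    rcases le_total a' a with h | h
    · exact H ε₁ ε₂ a a' hε hee h
    · have := H ε₁ ε₂ a' a hε hee h; nlinarith
  have key_w_sq : ∀ (ε a a' : ℝ), ((a - tr ε a) - (a' - tr ε a')) ^ 2 ≤ (a - a') ^ 2 := by
    have H : ∀ (ε a a' : ℝ), a' ≤ a → ((a - tr ε a) - (a' - tr ε a')) ^ 2 ≤ (a - a') ^ 2 := by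
      intro ε a a' h
      obtain ⟨h0, h1⟩ := tr_sub_bounds ε h
      nlinarith
    intro ε a a'
    rcases le_total a' a with h | h
    · exact H ε a a' h
    · have := H ε a' a h; nlinarith
  have tr0 : ∀ ε : ℝ, 0 ≤ ε → tr ε 0 = 0 := fun ε hε => tr_zero_of_abs_le (by simpa using hε)
  -- the approximating sequence
  set φ : ℕ → X → ℝ := fun k x => tr ((k:ℝ)+1)⁻¹ (u x) with hφdef
  have hεpos : ∀ k : ℕ, (0:ℝ) < ((k:ℝ)+1)⁻¹ := fun k => by positivity
  have hεmono : ∀ {j l : ℕ}, j ≤ l → ((l:ℝ)+1)⁻¹ ≤ ((j:ℝ)+1)⁻¹ := by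
    intro j l hjl
    have : (j:ℝ) + 1 ≤ (l:ℝ) + 1 := by exact_mod_cast Nat.succ_le_succ hjl
    exact inv_anti₀ (by positivity) this
  have hε0 : Tendsto (fun k : ℕ => ((k:ℝ)+1)⁻¹) atTop (𝓝 0) := by
    simpa [one_div] using tendsto_one_div_add_atTop_nhds_zero_nat (𝕜 := ℝ)
  have hφfin : ∀ k, FinSupp (φ k) := by
    intro k
    refine (hC0 _ (hεpos k)).subset fun x hx => ?_
    simp only [Function.mem_support, hφdef] at hx
    by_contra h
    simp only [Set.mem_setOf_eq, not_le] at h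
    exact hx (tr_zero_of_abs_le h.le)
  have hφ_abs_le : ∀ k x, |φ k x| ≤ |u x| := by
    intro k x
    have := key_abs ((k:ℝ)+1)⁻¹ (u x) 0
    simpa [hφdef, tr0 _ (hεpos k).le] using this
  have hφ_tend : ∀ x, Tendsto (fun k => φ k x) atTop (𝓝 (u x)) := by
    intro x
    have hb : ∀ k : ℕ, ‖φ k x - u x‖ ≤ ((k:ℝ)+1)⁻¹ := fun k => by
      rw [Real.norm_eq_abs, abs_sub_comm]
      exact tr_dist (hεpos k).le (u x)
    have h1 : Tendsto (fun k => φ k x - u x) atTop (𝓝 0) := squeeze_zero_norm hb hε0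
    simpa using h1.add_const (u x)
  -- per-k quantities and bounds
  have hcross_nn : ∀ k (p : X × X),
      0 ≤ b p.1 p.2 * (u p.1 - u p.2) * (φ k p.1 - φ k p.2) := by
    intro k p
    have h1 := key_sq_le_cross ((k:ℝ)+1)⁻¹ (u p.1) (u p.2)
    have h2 := sq_nonneg (tr ((k:ℝ)+1)⁻¹ (u p.1) - tr ((k:ℝ)+1)⁻¹ (u p.2))
    have h3 := hnn p.1 p.2
    simp only [hφdef]
    nlinarith
  have hA_le_cross : ∀ k (p : X × X),
      b p.1 p.2 * (φ k p.1 - φ k p.2) ^ 2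
        ≤ b p.1 p.2 * (u p.1 - u p.2) * (φ k p.1 - φ k p.2) := by
    intro k p
    have h1 := key_sq_le_cross ((k:ℝ)+1)⁻¹ (u p.1) (u p.2)
    have h3 := hnn p.1 p.2
    simp only [hφdef]
    nlinarith
  have hAsum : ∀ k, Summable fun p : X × X => b p.1 p.2 * (φ k p.1 - φ k p.2) ^ 2 :=
    fun k => Summable.of_nonneg_of_le (fun p => mul_nonneg (hnn _ _) (sq_nonneg _))
      (hA_le_cross k) (green (φ k) (hφfin k)).1
  have hBsum : ∀ k, Summable fun x => c x * (φ k x) ^ 2 := by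
    intro k
    apply summable_of_finite_support
    refine (hφfin k).subset fun x hx => ?_
    by_contra hxx
    exact (Function.mem_support.mp hx) (by simp [Function.notMem_support.mp hxx])
  have hCUsum : ∀ k, Summable fun x => c x * u x * φ k x := by
    intro k
    apply summable_of_finite_support
    refine (hφfin k).subset fun x hx => ?_
    by_contra hxx
    exact (Function.mem_support.mp hx) (by simp [Function.notMem_support.mp hxx])
  have hVLsum : ∀ k, Summable fun x => φ k x * L x := by
    intro k
    apply summable_of_finite_support
    refine (hφfin k).subset fun x hx => ?_
    by_contra hxx
    exact (Function.mem_support.mp hx) (by simp [Function.notMem_support.mp hxx])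
  have hVL_le : ∀ k, ∑' x, φ k x * L x ≤ S * N := by
    intro k
    calc ∑' x, φ k x * L x ≤ ∑' x, S * |L x| := by
          refine Summable.tsum_le_tsum (fun x => ?_) (hVLsum k) (habsL.mul_left S)
          calc φ k x * L x ≤ |φ k x * L x| := le_abs_self _
            _ = |φ k x| * |L x| := abs_mul _ _
            _ ≤ S * |L x| :=
                mul_le_mul_of_nonneg_right ((hφ_abs_le k x).trans (hS x)) (abs_nonneg _)
      _ = S * N := by rw [tsum_mul_left, hNdef]
  have hBpt : ∀ k x, c x * (φ k x) ^ 2 ≤ c x * u x * φ k x := by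
    intro k x
    have h1 := key_sq_le_cross ((k:ℝ)+1)⁻¹ (u x) 0
    rw [tr0 _ (hεpos k).le] at h1
    have h3 := hcnn x
    simp only [hφdef]
    nlinarith
  have hCU_nn : ∀ k, (0:ℝ) ≤ ∑' x, c x * u x * φ k x := by
    intro k
    refine tsum_nonneg fun x => ?_
    have := hBpt k x
    have h2 := mul_nonneg (hcnn x) (sq_nonneg (φ k x))
    linarith
  have hA_le : ∀ k, ∑' p : X × X, b p.1 p.2 * (φ k p.1 - φ k p.2) ^ 2 ≤ 2 * (S * N) := by
    intro k
    obtain ⟨hcs, heq⟩ := green (φ k) (hφfin k)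
    have h1 : ∑' p : X × X, b p.1 p.2 * (φ k p.1 - φ k p.2) ^ 2
        ≤ ∑' p : X × X, b p.1 p.2 * (u p.1 - u p.2) * (φ k p.1 - φ k p.2) :=
      Summable.tsum_le_tsum (hA_le_cross k) (hAsum k) hcs
    have h2 := hVL_le k
    have h3 := hCU_nn k
    linarith
  have hB_le : ∀ k, ∑' x, c x * (φ k x) ^ 2 ≤ S * N := by
    intro k
    obtain ⟨hcs, heq⟩ := green (φ k) (hφfin k)
    have h1 : ∑' x, c x * (φ k x) ^ 2 ≤ ∑' x, c x * u x * φ k x :=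
      Summable.tsum_le_tsum (hBpt k) (hBsum k) (hCUsum k)
    have h2 := hVL_le k
    have h3 : (0:ℝ) ≤ ∑' p : X × X, b p.1 p.2 * (u p.1 - u p.2) * (φ k p.1 - φ k p.2) :=
      tsum_nonneg (hcross_nn k)
    linarith
  -- monotone convergence: finiteness of the energy of u
  have hmono_pair : ∀ p : X × X,
      Monotone fun k => ENNReal.ofReal (b p.1 p.2 * (φ k p.1 - φ k p.2) ^ 2) := by
    intro p j l hjl
    apply ENNReal.ofReal_le_ofReal
    have hsq := key_sq_mono ((l:ℝ)+1)⁻¹ ((j:ℝ)+1)⁻¹ (u p.1) (u p.2) (hεpos l).le (hεmono hjl)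
    have h3 := hnn p.1 p.2
    simp only [hφdef]
    nlinarith
  have hsup_pair : ∀ p : X × X,
      (⨆ k, ENNReal.ofReal (b p.1 p.2 * (φ k p.1 - φ k p.2) ^ 2))
        = ENNReal.ofReal (b p.1 p.2 * (u p.1 - u p.2) ^ 2) := by
    intro p
    refine tendsto_nhds_unique (tendsto_atTop_iSup (hmono_pair p)) ?_
    apply ENNReal.tendsto_ofReal
    exact (((hφ_tend p.1).sub (hφ_tend p.2)).pow 2).const_mul _
  have hESr : (∑' p : X × X, ENNReal.ofReal (b p.1 p.2 * (u p.1 - u p.2) ^ 2))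
      = ⨆ k, ENNReal.ofReal (∑' p : X × X, b p.1 p.2 * (φ k p.1 - φ k p.2) ^ 2) := by
    calc (∑' p : X × X, ENNReal.ofReal (b p.1 p.2 * (u p.1 - u p.2) ^ 2))
        = ∑' p : X × X, ⨆ k, ENNReal.ofReal (b p.1 p.2 * (φ k p.1 - φ k p.2) ^ 2) :=
          tsum_congr fun p => (hsup_pair p).symm
      _ = ⨆ k, ∑' p : X × X, ENNReal.ofReal (b p.1 p.2 * (φ k p.1 - φ k p.2) ^ 2) :=
          tsum_iSup_of_monotone hmono_pair
      _ = ⨆ k, ENNReal.ofReal (∑' p : X × X, b p.1 p.2 * (φ k p.1 - φ k p.2) ^ 2) :=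
          iSup_congr fun k =>
            sum_ofReal_eq (fun p => mul_nonneg (hnn _ _) (sq_nonneg _)) (hAsum k)
  have hESr_ne : (∑' p : X × X, ENNReal.ofReal (b p.1 p.2 * (u p.1 - u p.2) ^ 2)) ≠ ⊤ := by
    rw [hESr]
    refine ne_top_of_le_ne_top (ENNReal.ofReal_ne_top (r := 2 * (S * N))) ?_
    exact iSup_le fun k => ENNReal.ofReal_le_ofReal (hA_le k)
  have hSrsum : Summable fun p : X × X => b p.1 p.2 * (u p.1 - u p.2) ^ 2 :=
    summable_of_sum_ofReal_ne_top (fun p => mul_nonneg (hnn _ _) (sq_nonneg _)) hESr_ne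
  have hmono_c : ∀ x : X, Monotone fun k => ENNReal.ofReal (c x * (φ k x) ^ 2) := by
    intro x j l hjl
    apply ENNReal.ofReal_le_ofReal
    have hsq := key_sq_mono ((l:ℝ)+1)⁻¹ ((j:ℝ)+1)⁻¹ (u x) 0 (hεpos l).le (hεmono hjl)
    rw [tr0 _ (hεpos l).le, tr0 _ (hεpos j).le] at hsq
    have h3 := hcnn x
    simp only [hφdef]
    nlinarith
  have hsup_c : ∀ x : X, (⨆ k, ENNReal.ofReal (c x * (φ k x) ^ 2))
      = ENNReal.ofReal (c x * u x ^ 2) := by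
    intro x
    refine tendsto_nhds_unique (tendsto_atTop_iSup (hmono_c x)) ?_
    apply ENNReal.tendsto_ofReal
    exact ((hφ_tend x).pow 2).const_mul _
  have hECr_ne : (∑' x, ENNReal.ofReal (c x * u x ^ 2)) ≠ ⊤ := by
    have : (∑' x, ENNReal.ofReal (c x * u x ^ 2))
        = ⨆ k, ENNReal.ofReal (∑' x, c x * (φ k x) ^ 2) := by
      calc (∑' x, ENNReal.ofReal (c x * u x ^ 2))
          = ∑' x, ⨆ k, ENNReal.ofReal (c x * (φ k x) ^ 2) :=
            tsum_congr fun x => (hsup_c x).symm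
        _ = ⨆ k, ∑' x, ENNReal.ofReal (c x * (φ k x) ^ 2) := tsum_iSup_of_monotone hmono_c
        _ = ⨆ k, ENNReal.ofReal (∑' x, c x * (φ k x) ^ 2) :=
            iSup_congr fun k =>
              sum_ofReal_eq (fun x => mul_nonneg (hcnn _) (sq_nonneg _)) (hBsum k)
    rw [this]
    refine ne_top_of_le_ne_top (ENNReal.ofReal_ne_top (r := S * N)) ?_
    exact iSup_le fun k => ENNReal.ofReal_le_ofReal (hB_le k)
  have hCrsum : Summable fun x => c x * u x ^ 2 :=
    summable_of_sum_ofReal_ne_top (fun x => mul_nonneg (hcnn _) (sq_nonneg _)) hECr_ne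
  -- dominated convergence: the three real limits
  have hcross_tend : Tendsto (fun k => ∑' p : X × X,
      b p.1 p.2 * (u p.1 - u p.2) * (φ k p.1 - φ k p.2)) atTop
      (𝓝 (∑' p : X × X, b p.1 p.2 * (u p.1 - u p.2) ^ 2)) := by
    refine tendsto_tsum_of_dominated_convergence hSrsum (fun p => ?_)
      (Filter.Eventually.of_forall fun k p => ?_)
    · have h := ((hφ_tend p.1).sub (hφ_tend p.2)).const_mul (b p.1 p.2 * (u p.1 - u p.2))
      have he : b p.1 p.2 * (u p.1 - u p.2) * (u p.1 - u p.2)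
          = b p.1 p.2 * (u p.1 - u p.2) ^ 2 := by ring
      rw [he] at h
      exact h
    · rw [Real.norm_eq_abs, abs_mul, abs_mul, abs_of_nonneg (hnn p.1 p.2)]
      have h1 : |φ k p.1 - φ k p.2| ≤ |u p.1 - u p.2| := key_abs ((k:ℝ)+1)⁻¹ (u p.1) (u p.2)
      have h2 := abs_nonneg (u p.1 - u p.2)
      have h3 := hnn p.1 p.2
      have h4 : |u p.1 - u p.2| * |u p.1 - u p.2| = (u p.1 - u p.2) ^ 2 := by
        rw [abs_mul_abs_self]; ring
      calc b p.1 p.2 * |u p.1 - u p.2| * |φ k p.1 - φ k p.2|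
          ≤ b p.1 p.2 * |u p.1 - u p.2| * |u p.1 - u p.2| :=
            mul_le_mul_of_nonneg_left h1 (mul_nonneg h3 h2)
        _ = b p.1 p.2 * (u p.1 - u p.2) ^ 2 := by rw [mul_assoc, h4]
  have hcu_tend : Tendsto (fun k => ∑' x, c x * u x * φ k x) atTop
      (𝓝 (∑' x, c x * u x ^ 2)) := by
    refine tendsto_tsum_of_dominated_convergence hCrsum (fun x => ?_)
      (Filter.Eventually.of_forall fun k x => ?_)
    · have h := (hφ_tend x).const_mul (c x * u x)
      have he : c x * u x * u x = c x * u x ^ 2 := by ring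
      rw [he] at h
      exact h
    · rw [Real.norm_eq_abs, abs_mul, abs_mul, abs_of_nonneg (hcnn x)]
      have h1 := hφ_abs_le k x
      have h2 := abs_nonneg (u x)
      have h3 := hcnn x
      have h4 : |u x| * |u x| = u x ^ 2 := by rw [abs_mul_abs_self]; ring
      calc c x * |u x| * |φ k x| ≤ c x * |u x| * |u x| :=
            mul_le_mul_of_nonneg_left h1 (mul_nonneg h3 h2)
        _ = c x * u x ^ 2 := by rw [mul_assoc, h4]
  have hULsum : Summable fun x => u x * L x := by
    rw [← summable_abs_iff]
    refine Summable.of_nonneg_of_le (fun x => abs_nonneg _) (fun x => ?_) (habsL.mul_left S)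
    rw [abs_mul]
    exact mul_le_mul_of_nonneg_right (hS x) (abs_nonneg _)
  have hVL_tend : Tendsto (fun k => ∑' x, φ k x * L x) atTop (𝓝 (∑' x, u x * L x)) := by
    refine tendsto_tsum_of_dominated_convergence (habsL.mul_left S) (fun x => ?_)
      (Filter.Eventually.of_forall fun k x => ?_)
    · exact (hφ_tend x).mul_const (L x)
    · rw [Real.norm_eq_abs, abs_mul]
      exact mul_le_mul_of_nonneg_right ((hφ_abs_le k x).trans (hS x)) (abs_nonneg _)
  -- the main identity
  have hmain : ∑' x, u x * L x
      = 2⁻¹ * (∑' p : X × X, b p.1 p.2 * (u p.1 - u p.2) ^ 2) + ∑' x, c x * u x ^ 2 := by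
    refine tendsto_nhds_unique ?_ ((hcross_tend.const_mul 2⁻¹).add hcu_tend)
    have heq : (fun k => ∑' x, φ k x * L x)
        = fun k => 2⁻¹ * (∑' p : X × X,
            b p.1 p.2 * (u p.1 - u p.2) * (φ k p.1 - φ k p.2)) + ∑' x, c x * u x * φ k x :=
      funext fun k => (green (φ k) (hφfin k)).2
    rw [← heq]
    exact hVL_tend
  have hEu : energy b c u = ENNReal.ofReal
      (2⁻¹ * (∑' p : X × X, b p.1 p.2 * (u p.1 - u p.2) ^ 2) + ∑' x, c x * u x ^ 2) :=
    energy_eq_ofReal b c u hnn hcnn hSrsum hCrsum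
  have hSr_nn : (0:ℝ) ≤ ∑' p : X × X, b p.1 p.2 * (u p.1 - u p.2) ^ 2 :=
    tsum_nonneg fun p => mul_nonneg (hnn _ _) (sq_nonneg _)
  have hCr_nn : (0:ℝ) ≤ ∑' x, c x * u x ^ 2 :=
    tsum_nonneg fun x => mul_nonneg (hcnn _) (sq_nonneg _)
  have htoReal : (energy b c u).toReal
      = 2⁻¹ * (∑' p : X × X, b p.1 p.2 * (u p.1 - u p.2) ^ 2) + ∑' x, c x * u x ^ 2 := by
    rw [hEu, ENNReal.toReal_ofReal (by positivity)]
  have hml : ∑' x, m x * u x * lap b c m u x = ∑' x, u x * L x :=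
    tsum_congr fun x => by rw [← hmlap x]; ring
  have hmlabs : ∑' x, m x * |lap b c m u x| = N := by
    rw [hNdef]
    refine tsum_congr fun x => ?_
    rw [← hmlap x, abs_mul, abs_of_pos (hmpos x)]
  refine ⟨?_, ?_, ?_⟩
  · -- MemD0
    refine ⟨φ, hφfin, ?_⟩
    have hw_tend0 : ∀ x, Tendsto (fun k => u x - φ k x) atTop (𝓝 0) := by
      intro x
      have hb : ∀ k : ℕ, ‖u x - φ k x‖ ≤ ((k:ℝ)+1)⁻¹ := fun k => by
        rw [Real.norm_eq_abs]
        exact tr_dist (hεpos k).le (u x)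
      exact squeeze_zero_norm hb hε0
    have hw_sq_le : ∀ k (p : X × X),
        b p.1 p.2 * ((u p.1 - φ k p.1) - (u p.2 - φ k p.2)) ^ 2
          ≤ b p.1 p.2 * (u p.1 - u p.2) ^ 2 := fun k p =>
      mul_le_mul_of_nonneg_left (by simpa [hφdef] using key_w_sq ((k:ℝ)+1)⁻¹ (u p.1) (u p.2))
        (hnn _ _)
    have hPk_sum : ∀ k, Summable fun p : X × X =>
        b p.1 p.2 * ((u p.1 - φ k p.1) - (u p.2 - φ k p.2)) ^ 2 := fun k =>
      Summable.of_nonneg_of_le (fun p => mul_nonneg (hnn _ _) (sq_nonneg _))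
        (hw_sq_le k) hSrsum
    have hwc_le : ∀ k x, c x * (u x - φ k x) ^ 2 ≤ c x * u x ^ 2 := by
      intro k x
      have h1 := key_w_sq ((k:ℝ)+1)⁻¹ (u x) 0
      rw [tr0 _ (hεpos k).le] at h1
      have h3 := hcnn x
      simp only [hφdef]
      nlinarith [h1]
    have hCk_sum : ∀ k, Summable fun x => c x * (u x - φ k x) ^ 2 := fun k =>
      Summable.of_nonneg_of_le (fun x => mul_nonneg (hcnn _) (sq_nonneg _))
        (hwc_le k) hCrsum
    have hPk_tend : Tendsto (fun k => ∑' p : X × X,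
        b p.1 p.2 * ((u p.1 - φ k p.1) - (u p.2 - φ k p.2)) ^ 2) atTop (𝓝 0) := by
      have h0 : (0:ℝ) = ∑' _p : X × X, (0:ℝ) := by rw [tsum_zero]
      rw [h0]
      refine tendsto_tsum_of_dominated_convergence hSrsum (fun p => ?_)
        (Filter.Eventually.of_forall fun k p => ?_)
      · have := (((hw_tend0 p.1).sub (hw_tend0 p.2)).pow 2).const_mul (b p.1 p.2)
        simpa using this
      · rw [Real.norm_eq_abs, abs_of_nonneg (mul_nonneg (hnn _ _) (sq_nonneg _))]
        exact hw_sq_le k p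
    have hCk_tend : Tendsto (fun k => ∑' x, c x * (u x - φ k x) ^ 2) atTop (𝓝 0) := by
      have h0 : (0:ℝ) = ∑' _x : X, (0:ℝ) := by rw [tsum_zero]
      rw [h0]
      refine tendsto_tsum_of_dominated_convergence hCrsum (fun x => ?_)
        (Filter.Eventually.of_forall fun k x => ?_)
      · have := (((hw_tend0 x)).pow 2).const_mul (c x)
        simpa using this
      · rw [Real.norm_eq_abs, abs_of_nonneg (mul_nonneg (hcnn _) (sq_nonneg _))]
        exact hwc_le k x
    have henergy_k : ∀ k, energy b c (fun x => u x - φ k x) = ENNReal.ofReal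
        (2⁻¹ * (∑' p : X × X, b p.1 p.2 * ((u p.1 - φ k p.1) - (u p.2 - φ k p.2)) ^ 2)
          + ∑' x, c x * (u x - φ k x) ^ 2) := fun k =>
      energy_eq_ofReal b c _ hnn hcnn (hPk_sum k) (hCk_sum k)
    have h1 : Tendsto (fun k => 2⁻¹ * (∑' p : X × X,
        b p.1 p.2 * ((u p.1 - φ k p.1) - (u p.2 - φ k p.2)) ^ 2)
          + ∑' x, c x * (u x - φ k x) ^ 2) atTop (𝓝 0) := by
      have := (hPk_tend.const_mul 2⁻¹).add hCk_tend
      simpa using this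
    have h2 := ENNReal.tendsto_ofReal h1
    have hpt : Tendsto (fun k => (u o - φ k o) ^ 2) atTop (𝓝 0) := by
      have := (hw_tend0 o).pow 2
      simpa using this
    have h3 := ENNReal.tendsto_ofReal hpt
    have h4 := h2.add h3
    simp only [ENNReal.ofReal_zero, add_zero] at h4
    refine Tendsto.congr (fun k => ?_) h4
    rw [henergy_k k]
  · -- the identity
    rw [hml, hmain, htoReal]
  · -- the inequality
    rw [htoReal, hmlabs, ← hmain]
    calc ∑' x, u x * L x ≤ ∑' x, S * |L x| := by
          refine Summable.tsum_le_tsum (fun x => ?_) hULsum (habsL.mul_left S)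
          calc u x * L x ≤ |u x * L x| := le_abs_self _
            _ = |u x| * |L x| := abs_mul _ _
            _ ≤ S * |L x| := mul_le_mul_of_nonneg_right (hS x) (abs_nonneg _)
      _ = S * N := by rw [tsum_mul_left, hNdef]

end HG
end
end
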